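/- arXiv:2107.07982 — 10 statements merged into one kernel-verified Lean document; each statement's English description precedes it below -/
import Mathlib

section
/- Let b : ℤ → [0,∞) be not all zero, let tf be the associated max-times tropical Laurent series with domain D, and let Y be the set of points in the interior of D at which tf is not differentiable. Then every point of Y is isolated in Y (i.e., each y ∈ Y has a neighborhood containing no other point of Y), and every accumulation point of Y belongs to {inf Y, sup Y}. -/
open Filter
open Topology

/-- The set of values `b_j * x^j` over indices `j` with `b_j > 0`. -/
noncomputable def tropSet (b : ℤ → ℝ) (x : ℝ) : Set ℝ :=
  Set.range fun j : {j : ℤ // 0 < b j} => b j.1 * x ^ (j.1 : ℤ)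

/-- The domain of the max-times tropical Laurent series. -/
noncomputable def tropDomain (b : ℤ → ℝ) : Set ℝ :=
  {x : ℝ | 0 ≤ x ∧ BddAbove (tropSet b x)}

/-- The max-times tropical Laurent series. -/
noncomputable def tropFn (b : ℤ → ℝ) (x : ℝ) : ℝ :=
  sSup (tropSet b x)

/-- The set of points in the interior of the domain at which the tropical
Laurent series is not differentiable. -/
noncomputable def tropNondiff (b : ℤ → ℝ) : Set ℝ :=
  {y : ℝ | y ∈ interior (tropDomain b) ∧ ¬ DifferentiableAt ℝ (tropFn b) y}

lemma trop_mem {b : ℤ → ℝ} {j : ℤ} (hj : 0 < b j) (x : ℝ) :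
    b j * x ^ j ∈ tropSet b x := ⟨⟨j, hj⟩, rfl⟩

lemma zpow_min_le {u v y : ℝ} (hu : 0 < u) (h1 : u ≤ y) (h2 : y ≤ v) (j : ℤ) :
    min (u ^ j) (v ^ j) ≤ y ^ j := by
  have hy : 0 < y := hu.trans_le h1
  rcases le_or_gt 0 j with hj | hj
  · obtain ⟨n, rfl⟩ := Int.eq_ofNat_of_zero_le hj
    refine le_trans (min_le_left _ _) ?_
    rw [zpow_natCast, zpow_natCast]
    exact pow_le_pow_left₀ hu.le h1 n
  · obtain ⟨n, rfl⟩ : ∃ n : ℕ, j = -(n : ℤ) := ⟨(-j).toNat, by omega⟩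
    simp only [zpow_neg, zpow_natCast]
    exact le_trans (min_le_right _ _) (inv_anti₀ (pow_pos hy _) (pow_le_pow_left₀ hy.le h2 _))

lemma zpow_le_max {u v y : ℝ} (hu : 0 < u) (h1 : u ≤ y) (h2 : y ≤ v) (j : ℤ) :
    y ^ j ≤ max (u ^ j) (v ^ j) := by
  have hy : 0 < y := hu.trans_le h1
  rcases le_or_gt 0 j with hj | hj
  · obtain ⟨n, rfl⟩ := Int.eq_ofNat_of_zero_le hj
    refine le_trans ?_ (le_max_right _ _)
    rw [zpow_natCast, zpow_natCast]
    exact pow_le_pow_left₀ hy.le h2 n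
  · obtain ⟨n, rfl⟩ : ∃ n : ℕ, j = -(n : ℤ) := ⟨(-j).toNat, by omega⟩
    simp only [zpow_neg, zpow_natCast]
    exact le_trans (inv_anti₀ (pow_pos hu _) (pow_le_pow_left₀ hu.le h1 _)) (le_max_left _ _)

lemma cross_subsingleton {bi bj : ℝ} (hbi : 0 < bi) {i j : ℤ} (hij : i ≠ j) :
    Set.Subsingleton {x : ℝ | 0 < x ∧ bi * x ^ i = bj * x ^ j} := by
  have key : ∀ x : ℝ, 0 < x → bi * x ^ i = bj * x ^ j → bi * x ^ (i - j) = bj := by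
    intro x hx he
    rw [zpow_sub₀ hx.ne', ← mul_div_assoc, he, mul_div_assoc,
      div_self (zpow_ne_zero _ hx.ne'), mul_one]
  rintro x ⟨hx0, hxe⟩ y ⟨hy0, hye⟩
  have h1 := key x hx0 hxe
  have h2 := key y hy0 hye
  have h3 : x ^ (i - j) = y ^ (i - j) := mul_left_cancel₀ hbi.ne' (h1.trans h2.symm)
  have h4 := congrArg Real.log h3
  rw [Real.log_zpow, Real.log_zpow] at h4
  have h5 : Real.log x = Real.log y := by
    have hij' : ((i - j : ℤ) : ℝ) ≠ 0 := by
      exact_mod_cast sub_ne_zero.mpr hij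
    exact mul_left_cancel₀ hij' h4
  calc x = Real.exp (Real.log x) := (Real.exp_log hx0).symm
    _ = Real.exp (Real.log y) := by rw [h5]
    _ = y := Real.exp_log hy0

lemma trop_Icc_subset {b : ℤ → ℝ} {u v : ℝ} (hu : u ∈ tropDomain b) (hv : v ∈ tropDomain b)
    (hu0 : 0 < u) : Set.Icc u v ⊆ tropDomain b := by
  obtain ⟨-, Mu, hMu⟩ := hu
  obtain ⟨-, Mv, hMv⟩ := hv
  intro z hz
  refine ⟨hu0.le.trans hz.1, max Mu Mv, ?_⟩
  rintro t ⟨⟨j, hj⟩, rfl⟩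
  have h1 : b j * z ^ j ≤ b j * max (u ^ j) (v ^ j) :=
    mul_le_mul_of_nonneg_left (zpow_le_max hu0 hz.1 hz.2 j) hj.le
  rcases max_cases (u ^ j) (v ^ j) with ⟨he, -⟩ | ⟨he, -⟩
  · rw [he] at h1
    exact h1.trans (le_trans (hMu (trop_mem hj u)) (le_max_left _ _))
  · rw [he] at h1
    exact h1.trans (le_trans (hMv (trop_mem hj v)) (le_max_right _ _))

lemma interior_pos {b : ℤ → ℝ} {x : ℝ} (hx : x ∈ interior (tropDomain b)) :
    ∃ p q : ℝ, 0 < p ∧ p < x ∧ x < q ∧ p ∈ tropDomain b ∧ q ∈ tropDomain b := by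
  obtain ⟨ε, hε, hball⟩ := Metric.isOpen_iff.mp isOpen_interior x hx
  have hsub : Set.Ioo (x - ε) (x + ε) ⊆ tropDomain b := by
    rw [← Real.ball_eq_Ioo]
    exact fun y hy => interior_subset (hball hy)
  have hp : x - ε / 2 ∈ tropDomain b := hsub ⟨by linarith, by linarith⟩
  have hq : x + ε / 2 ∈ tropDomain b := hsub ⟨by linarith, by linarith⟩
  have h3 : x - 3 * ε / 4 ∈ tropDomain b := hsub ⟨by linarith, by linarith⟩
  have hx3 : 0 ≤ x - 3 * ε / 4 := h3.1
  exact ⟨x - ε / 2, x + ε / 2, by linarith, by linarith, by linarith, hp, hq⟩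

lemma interior_ordconn {b : ℤ → ℝ} {u v x : ℝ} (hu : u ∈ interior (tropDomain b))
    (hv : v ∈ interior (tropDomain b)) (h1 : u ≤ x) (h2 : x ≤ v) :
    x ∈ interior (tropDomain b) := by
  obtain ⟨p, -, hp0, hpu, -, hpD, -⟩ := interior_pos hu
  obtain ⟨-, q, -, -, hvq, -, hqD⟩ := interior_pos hv
  have hIcc : Set.Icc p q ⊆ tropDomain b := trop_Icc_subset hpD hqD hp0
  have hIoo : Set.Ioo p q ⊆ interior (tropDomain b) :=
    interior_maximal (fun y hy => hIcc ⟨hy.1.le, hy.2.le⟩) isOpen_Ioo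
  exact hIoo ⟨hpu.trans_le h1, h2.trans_lt hvq⟩

lemma lemA (b : ℤ → ℝ) (hb : ∀ j, 0 ≤ b j) (hne : ∃ j, 0 < b j) {x0 : ℝ}
    (hx0 : x0 ∈ interior (tropDomain b)) :
    ∃ u v : ℝ, u < x0 ∧ x0 < v ∧ (tropNondiff b ∩ Set.Ioo u v).Finite := by
  classical
  obtain ⟨j0, hj0⟩ := hne
  obtain ⟨p, q, hp0, hpx, hxq, hpD, hqD⟩ := interior_pos hx0
  set u := (p + x0) / 2 with hu_def
  set v := (x0 + q) / 2 with hv_def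
  have hpu : p < u := by rw [hu_def]; linarith
  have hu0 : 0 < u := hp0.trans hpu
  have hux : u < x0 := by rw [hu_def]; linarith
  have hxv : x0 < v := by rw [hv_def]; linarith
  have hvq : v < q := by rw [hv_def]; linarith
  have huv : u < v := hux.trans hxv
  have hq0 : 0 < q := hp0.trans (hpx.trans hxq)
  obtain ⟨Mp, hMp⟩ := hpD.2
  obtain ⟨Mq, hMq⟩ := hqD.2
  set M := max Mp Mq with hM_def
  have hM0 : 0 < M :=
    lt_of_lt_of_le (mul_pos hj0 (zpow_pos hp0 j0))
      (le_trans (hMp (trop_mem hj0 p)) (le_max_left _ _))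
  set ρ := max (v / q) (p / u) with hρ_def
  have hρ0 : 0 < ρ :=
    lt_of_lt_of_le (div_pos (hu0.trans huv) hq0) (le_max_left _ _)
  have hρ1 : ρ < 1 := max_lt ((div_lt_one hq0).mpr hvq) ((div_lt_one hu0).mpr hpu)
  set m0 := min (b j0 * u ^ j0) (b j0 * v ^ j0) with hm0_def
  have hm00 : 0 < m0 :=
    lt_min (mul_pos hj0 (zpow_pos hu0 _)) (mul_pos hj0 (zpow_pos (hu0.trans huv) _))
  have hm0le : ∀ y ∈ Set.Ioo u v, m0 ≤ b j0 * y ^ j0 := by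
    intro y hy
    have h := mul_le_mul_of_nonneg_left (zpow_min_le hu0 hy.1.le hy.2.le j0) hj0.le
    refine le_trans ?_ h
    rcases min_cases (u ^ j0) (v ^ j0) with ⟨he, -⟩ | ⟨he, -⟩ <;> rw [he]
    · exact min_le_left _ _
    · exact min_le_right _ _
  obtain ⟨N0, hN0⟩ := exists_pow_lt_of_lt_one (div_pos hm00 hM0) hρ1
  set N := max N0 (|j0|).toNat with hN_def
  have hMρN : M * ρ ^ N < m0 := by
    have h1 : ρ ^ N ≤ ρ ^ N0 := pow_le_pow_of_le_one hρ0.le hρ1.le (le_max_left _ _)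
    have h2 : M * ρ ^ N0 < m0 := by
      have := (lt_div_iff₀ hM0).mp hN0
      linarith
    calc M * ρ ^ N ≤ M * ρ ^ N0 := mul_le_mul_of_nonneg_left h1 hM0.le
      _ < m0 := h2
  have htail : ∀ y ∈ Set.Ioo u v, ∀ j : ℤ, 0 < b j → (N : ℤ) < |j| → b j * y ^ j < m0 := by
    intro y hy j hbj hNj
    have hy0 : 0 < y := hu0.trans hy.1
    rcases le_or_gt 0 j with hjpos | hjneg
    · -- use q
      have hkey : b j * y ^ j = (b j * q ^ j) * (y / q) ^ j := by
        rw [mul_assoc, ← mul_zpow, mul_div_cancel₀ _ hq0.ne']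
      obtain ⟨n, rfl⟩ := Int.eq_ofNat_of_zero_le hjpos
      have hnN : N ≤ n := by
        rw [abs_of_nonneg hjpos] at hNj
        exact_mod_cast hNj.le
      have hb1 : b n * q ^ (n : ℤ) ≤ M :=
        le_trans (hMq (trop_mem hbj q)) (le_max_right _ _)
      have hb2 : ((y / q) : ℝ) ^ (n : ℤ) ≤ ρ ^ N := by
        rw [zpow_natCast]
        calc (y / q) ^ n ≤ ρ ^ n := by
              refine pow_le_pow_left₀ (div_nonneg hy0.le hq0.le) ?_ n
              exact le_trans (div_le_div_of_nonneg_right hy.2.le hq0.le) (le_max_left _ _)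
          _ ≤ ρ ^ N := pow_le_pow_of_le_one hρ0.le hρ1.le hnN
      calc b n * y ^ (n : ℤ) = (b n * q ^ (n : ℤ)) * (y / q) ^ (n : ℤ) := hkey
        _ ≤ M * ρ ^ N := by
            refine mul_le_mul hb1 hb2 (by positivity) hM0.le
        _ < m0 := hMρN
    · -- use p
      have hkey : b j * y ^ j = (b j * p ^ j) * (y / p) ^ j := by
        rw [mul_assoc, ← mul_zpow, mul_div_cancel₀ _ hp0.ne']
      set n := (-j).toNat with hn_def
      have hjn : j = -(n : ℤ) := by
        rw [hn_def, Int.toNat_of_nonneg (by omega : (0:ℤ) ≤ -j)]; ring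
      have hnN : N ≤ n := by
        rw [abs_of_neg hjneg] at hNj
        omega
      have hb1 : b j * p ^ j ≤ M :=
        le_trans (hMp (trop_mem hbj p)) (le_max_left _ _)
      have hb2 : ((y / p) : ℝ) ^ j ≤ ρ ^ N := by
        have he : ((y / p) : ℝ) ^ j = (p / y) ^ n := by
          rw [hjn, zpow_neg, ← inv_zpow, inv_div, zpow_natCast]
        rw [he]
        calc (p / y) ^ n ≤ ρ ^ n := by
              refine pow_le_pow_left₀ (div_nonneg hp0.le hy0.le) ?_ n
              exact le_trans (div_le_div_of_nonneg_left hp0.le hu0 hy.1.le) (le_max_right _ _)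
          _ ≤ ρ ^ N := pow_le_pow_of_le_one hρ0.le hρ1.le hnN
      calc b j * y ^ j = (b j * p ^ j) * (y / p) ^ j := hkey
        _ ≤ M * ρ ^ N := mul_le_mul hb1 hb2 (zpow_nonneg (div_nonneg hy0.le hp0.le) _) hM0.le
        _ < m0 := hMρN
  set S := (Finset.Icc (-(N : ℤ)) (N : ℤ)).filter (fun j => 0 < b j) with hS_def
  have hj0abs : |j0| ≤ (N : ℤ) := Int.toNat_le.mp (le_max_right _ _)
  have hj0S : j0 ∈ S := by
    rw [hS_def, Finset.mem_filter, Finset.mem_Icc]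
    exact ⟨⟨neg_le_of_abs_le hj0abs, le_of_abs_le hj0abs⟩, hj0⟩
  have hSmem : ∀ {j : ℤ}, 0 < b j → |j| ≤ (N : ℤ) → j ∈ S := by
    intro j hbj hjN
    rw [hS_def, Finset.mem_filter, Finset.mem_Icc]
    exact ⟨⟨neg_le_of_abs_le hjN, le_of_abs_le hjN⟩, hbj⟩
  have hSpos : ∀ {j : ℤ}, j ∈ S → 0 < b j := fun hj => (Finset.mem_filter.mp hj).2
  set C := ⋃ i ∈ S, ⋃ j ∈ S,
    {x : ℝ | x ∈ Set.Ioo u v ∧ i ≠ j ∧ b i * x ^ i = b j * x ^ j} with hC_def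
  have hCfin : C.Finite := by
    refine Set.Finite.biUnion S.finite_toSet fun i hi =>
      Set.Finite.biUnion S.finite_toSet fun j hj => ?_
    refine Set.Subsingleton.finite ?_
    have hsub : {x : ℝ | x ∈ Set.Ioo u v ∧ i ≠ j ∧ b i * x ^ i = b j * x ^ j} ⊆
        {x : ℝ | 0 < x ∧ b i * x ^ i = b j * x ^ j} := by
      rintro x ⟨hx1, -, hx3⟩
      exact ⟨hu0.trans hx1.1, hx3⟩
    rcases eq_or_ne i j with rfl | hij
    · intro x hx y hy
      exact absurd rfl hx.2.1
    · exact (cross_subsingleton (hSpos hi) hij).anti hsub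
  refine ⟨u, v, hux, hxv, hCfin.subset ?_⟩
  rintro x ⟨⟨hxint, hxdiff⟩, hxuv⟩
  by_contra hxC
  refine hxdiff ?_
  have hx0' : 0 < x := hu0.trans hxuv.1
  have hnc : ∀ i ∈ S, ∀ j ∈ S, i ≠ j → b i * x ^ i ≠ b j * x ^ j := by
    intro i hi j hj hij he
    exact hxC (Set.mem_biUnion hi (Set.mem_biUnion hj ⟨hxuv, hij, he⟩))
  obtain ⟨j1, hj1S, hj1max⟩ := Finset.exists_max_image S (fun j => b j * x ^ j) ⟨j0, hj0S⟩
  have hb1 : 0 < b j1 := hSpos hj1S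
  have hev : ∀ᶠ y in 𝓝 x, tropFn b y = b j1 * y ^ j1 := by
    have h1 : ∀ᶠ y in 𝓝 x, y ∈ Set.Ioo u v := isOpen_Ioo.eventually_mem hxuv
    have h2 : ∀ᶠ y in 𝓝 x, ∀ j ∈ S, b j * y ^ j ≤ b j1 * y ^ j1 := by
      rw [Finset.eventually_all]
      intro j hj
      rcases eq_or_ne j j1 with rfl | hne'
      · exact Filter.Eventually.of_forall fun _ => le_rfl
      · have hlt : b j * x ^ j < b j1 * x ^ j1 :=
          lt_of_le_of_ne (hj1max j hj) (hnc j hj j1 hj1S hne')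
        have c1 : ContinuousAt (fun y : ℝ => b j * y ^ j) x :=
          (continuousAt_zpow₀ x j (Or.inl hx0'.ne')).const_mul (b j)
        have c2 : ContinuousAt (fun y : ℝ => b j1 * y ^ j1) x :=
          (continuousAt_zpow₀ x j1 (Or.inl hx0'.ne')).const_mul (b j1)
        exact (c1.eventually_lt c2 hlt).mono fun y h => h.le
    filter_upwards [h1, h2] with y hy1 hy2
    refine IsGreatest.csSup_eq ⟨trop_mem hb1 y, ?_⟩
    rintro t ⟨⟨j, hbj⟩, rfl⟩
    by_cases hjN : |j| ≤ (N : ℤ)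
    · exact hy2 j (hSmem hbj hjN)
    · have h3 := htail y hy1 j hbj (lt_of_not_ge hjN)
      exact le_trans h3.le (le_trans (hm0le y hy1) (hy2 j0 hj0S))
  have hdiff : DifferentiableAt ℝ (fun y : ℝ => b j1 * y ^ j1) x :=
    (differentiableAt_zpow.mpr (Or.inl hx0'.ne')).const_mul _
  exact hdiff.congr_of_eventuallyEq hev

lemma not_acc_of_finite {Y : Set ℝ} {u v x : ℝ} (hx : x ∈ Set.Ioo u v)
    (hfin : (Y ∩ Set.Ioo u v).Finite) : ¬ AccPt x (𝓟 Y) := by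
  intro hacc
  have hTfin : ((Y ∩ Set.Ioo u v) \ {x}).Finite := hfin.diff
  have hUo : IsOpen (Set.Ioo u v \ ((Y ∩ Set.Ioo u v) \ {x})) :=
    isOpen_Ioo.sdiff hTfin.isClosed
  have hxU : x ∈ Set.Ioo u v \ ((Y ∩ Set.Ioo u v) \ {x}) :=
    ⟨hx, fun h => h.2 rfl⟩
  obtain ⟨z, hz, hzx⟩ := accPt_iff_nhds.mp hacc _ (hUo.mem_nhds hxU)
  exact hz.1.2 ⟨⟨hz.2, hz.1.1⟩, hzx⟩

/-- every point of `Y` is isolated in `Y`, and every accumulation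
point of `Y` belongs to `{inf Y, sup Y}`. -/
theorem statement2 (b : ℤ → ℝ) (hb : ∀ j, 0 ≤ b j) (hne : ∃ j, 0 < b j) :
    (∀ y ∈ tropNondiff b, ¬ AccPt y (𝓟 (tropNondiff b))) ∧
    (∀ x : ℝ, AccPt x (𝓟 (tropNondiff b)) →
      x = sInf (tropNondiff b) ∨ x = sSup (tropNondiff b)) := by
  constructor
  · intro y hy
    obtain ⟨u, v, huy, hyv, hfin⟩ := lemA b hb hne hy.1
    exact not_acc_of_finite ⟨huy, hyv⟩ hfin
  · intro x hacc
    have hxm : x ∉ interior (tropDomain b) := by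
      intro hxint
      obtain ⟨u, v, hux, hxv, hfin⟩ := lemA b hb hne hxint
      exact not_acc_of_finite ⟨hux, hxv⟩ hfin hacc
    obtain ⟨z0, hz0, -⟩ := accPt_iff_nhds.mp hacc _ Filter.univ_mem
    have hYne : (tropNondiff b).Nonempty := ⟨z0, hz0.2⟩
    have hbound : (∀ y ∈ tropNondiff b, x ≤ y) ∨ (∀ y ∈ tropNondiff b, y ≤ x) := by
      by_contra h
      push_neg at h
      obtain ⟨⟨y1, hy1, h1⟩, ⟨y2, hy2, h2⟩⟩ := h
      exact hxm (interior_ordconn hy1.1 hy2.1 h1.le h2.le)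
    rcases hbound with h | h
    · left
      refine le_antisymm (le_csInf hYne h) ?_
      by_contra hlt
      push_neg at hlt
      obtain ⟨z, hz, -⟩ := accPt_iff_nhds.mp hacc _ (Iio_mem_nhds hlt)
      exact absurd (csInf_le ⟨x, h⟩ hz.2) (not_le.mpr hz.1)
    · right
      refine le_antisymm ?_ (csSup_le hYne h)
      by_contra hlt
      push_neg at hlt
      obtain ⟨z, hz, -⟩ := accPt_iff_nhds.mp hacc _ (Ioi_mem_nhds hlt)
      exact absurd (le_csSup ⟨x, h⟩ hz.2) (not_le.mpr hz.1)
end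

section
/- Let p < q be integers and let B_p, …, B_q be n×n complex matrices with ‖B_i‖ ≤ 1 for all p ≤ i ≤ q, ‖B_p‖ = ‖B_q‖ = 1, and B_p and B_q invertible. Then every λ ∈ ℂ with λ ≠ 0 and det(∑_{i=p}^{q} B_i λ^i) = 0 satisfies (1 + κ(B_p))^{−1} < |λ| < 1 + κ(B_q). -/
/-- An `n×n` complex matrix viewed as a linear operator on `ℂⁿ` with the
Euclidean norm, so that `‖·‖` is the induced (spectral) operator norm. -/
noncomputable abbrev EucOp (n : ℕ) :=
  EuclideanSpace ℂ (Fin n) →L[ℂ] EuclideanSpace ℂ (Fin n)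

/-- The condition number `κ(B) = ‖B‖·‖B⁻¹‖` of an (invertible) matrix. -/
noncomputable def kappa {n : ℕ} (B : EucOp n) : ℝ :=
  ‖B‖ * ‖Ring.inverse B‖

lemma geom_aux {a : ℝ} (ha : 1 < a) (p q : ℤ) (hpq : p < q) :
    ∑ i ∈ Finset.Ico p q, a ^ (i - q) < (a - 1)⁻¹ := by
  have ha0 : 0 < a := lt_trans one_pos ha
  set N := (q - p).toNat with hN
  have key : ∑ i ∈ Finset.Ico p q, a ^ (i - q) =
      ∑ k ∈ Finset.range N, (a⁻¹) ^ (k + 1) := by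
    refine Finset.sum_nbij' (fun i => (q - 1 - i).toNat) (fun k => q - 1 - (k : ℤ))
      ?_ ?_ ?_ ?_ ?_
    · intro i hi
      simp only [Finset.mem_Ico] at hi
      simp only [Finset.mem_range]
      omega
    · intro k hk
      simp only [Finset.mem_range] at hk
      simp only [Finset.mem_Ico]
      omega
    · intro i hi
      simp only [Finset.mem_Ico] at hi
      show q - 1 - ((q - 1 - i).toNat : ℤ) = i
      omega
    · intro k hk
      simp only [Finset.mem_range] at hk
      show (q - 1 - (q - 1 - (k : ℤ))).toNat = k
      omega
    · intro i hi
      simp only [Finset.mem_Ico] at hi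
      show a ^ (i - q) = (a⁻¹) ^ ((q - 1 - i).toNat + 1)
      have h2 : (((q - 1 - i).toNat + 1 : ℕ) : ℤ) = q - i := by omega
      calc a ^ (i - q) = (a ^ (q - i))⁻¹ := by
            rw [← zpow_neg]; congr 1; ring
        _ = (a⁻¹) ^ (q - i) := by rw [inv_zpow]
        _ = (a⁻¹) ^ (((q - 1 - i).toNat + 1 : ℕ) : ℤ) := by rw [h2]
        _ = (a⁻¹) ^ ((q - 1 - i).toNat + 1) := by rw [zpow_natCast]
  rw [key]
  have hr0 : 0 < a⁻¹ := inv_pos.2 ha0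
  have hr1 : a⁻¹ < 1 := inv_lt_one_of_one_lt₀ ha
  have hsum : ∑ k ∈ Finset.range N, (a⁻¹) ^ (k + 1)
      = a⁻¹ * ∑ k ∈ Finset.range N, (a⁻¹) ^ k := by
    rw [Finset.mul_sum]
    exact Finset.sum_congr rfl fun k _ => by ring
  have hgeom : ∑ k ∈ Finset.range N, (a⁻¹) ^ k < (1 - a⁻¹)⁻¹ := by
    have := geom_sum_eq (ne_of_lt hr1) N
    rw [this]
    have hpow : 0 < (a⁻¹) ^ N := pow_pos hr0 N
    have hd : 0 < 1 - a⁻¹ := by linarith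
    rw [div_lt_iff_of_neg (by linarith : a⁻¹ - 1 < 0)]
    have : (1 - a⁻¹)⁻¹ * (1 - a⁻¹) = 1 := inv_mul_cancel₀ (ne_of_gt hd)
    nlinarith [inv_pos.2 hd]
  rw [hsum]
  have h1 : a⁻¹ * ∑ k ∈ Finset.range N, (a⁻¹) ^ k < a⁻¹ * (1 - a⁻¹)⁻¹ :=
    (mul_lt_mul_iff_right₀ hr0).2 hgeom
  have h2 : a⁻¹ * (1 - a⁻¹)⁻¹ = (a - 1)⁻¹ := by
    rw [← mul_inv]
    congr 1
    field_simp
  linarith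

lemma upper_bound (n : ℕ) (hn : 1 ≤ n) (p q : ℤ) (hpq : p < q)
    (B : ℤ → EucOp n)
    (hbd : ∀ i : ℤ, p ≤ i → i ≤ q → ‖B i‖ ≤ 1)
    (hBq : ‖B q‖ = 1) (hBqU : IsUnit (B q))
    (lam : ℂ) (hlam : lam ≠ 0)
    (hdet : LinearMap.det
      (∑ i ∈ Finset.Icc p q, lam ^ i • B i : EucOp n).toLinearMap = 0) :
    ‖lam‖ < 1 + kappa (B q) := by
  haveI : Nonempty (Fin n) := ⟨⟨0, hn⟩⟩
  haveI : Nontrivial (EuclideanSpace ℂ (Fin n)) := inferInstance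
  by_contra hcon
  push_neg at hcon
  set a := ‖lam‖ with haa
  set κ := ‖Ring.inverse (B q)‖ with hκdef
  have hkap : kappa (B q) = κ := by rw [kappa, hBq, one_mul]
  rw [hkap] at hcon
  set C := Ring.inverse (B q) with hCdef
  have hC : B q * C = 1 := Ring.mul_inverse_cancel _ hBqU
  have hκ1 : 1 ≤ κ := by
    have h1 : (1 : ℝ) = ‖B q * C‖ := by rw [hC, norm_one]
    have h2 : ‖B q * C‖ ≤ ‖B q‖ * ‖C‖ := norm_mul_le _ _
    rw [hBq, one_mul] at h2
    linarith
  have ha2 : 2 ≤ a := by linarith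
  have ha1 : 1 < a := by linarith
  have ha0 : 0 < a := by linarith
  -- the perturbation
  set E : EucOp n := ∑ i ∈ Finset.Ico p q, lam ^ (i - q) • (C * B i) with hEdef
  have hE : ‖E‖ < 1 := by
    have h1 : ‖E‖ ≤ ∑ i ∈ Finset.Ico p q, a ^ (i - q) * κ := by
      refine (norm_sum_le _ _).trans (Finset.sum_le_sum fun i hi => ?_)
      simp only [Finset.mem_Ico] at hi
      rw [norm_smul (lam ^ (i - q)) (C * B i), norm_zpow]
      have hCB : ‖C * B i‖ ≤ κ := by
        calc ‖C * B i‖ ≤ ‖C‖ * ‖B i‖ := norm_mul_le _ _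
          _ ≤ κ * 1 := by
              refine mul_le_mul le_rfl (hbd i hi.1 (le_of_lt hi.2)) (norm_nonneg _) ?_
              rw [hκdef]; exact norm_nonneg _
          _ = κ := mul_one κ
      exact mul_le_mul le_rfl hCB (norm_nonneg _) (zpow_nonneg (le_of_lt ha0) _)
    have h2 : ∑ i ∈ Finset.Ico p q, a ^ (i - q) * κ
        = (∑ i ∈ Finset.Ico p q, a ^ (i - q)) * κ := by rw [Finset.sum_mul]
    have h3 : (∑ i ∈ Finset.Ico p q, a ^ (i - q)) * κ < (a - 1)⁻¹ * κ := by
      refine mul_lt_mul_of_pos_right (geom_aux ha1 p q hpq) (by linarith)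
    have h4 : (a - 1)⁻¹ * κ ≤ 1 := by
      rw [inv_mul_le_iff₀ (by linarith : (0:ℝ) < a - 1)]
      linarith
    linarith
  -- 1 + E is a unit
  have hunit1 : IsUnit (1 + E : EucOp n) := by
    have : IsUnit (1 - (-E) : EucOp n) := (Units.oneSub (-E) (by rwa [norm_neg])).isUnit
    rwa [sub_neg_eq_add] at this
  -- the key identity
  have hkey : (∑ i ∈ Finset.Icc p q, lam ^ i • B i : EucOp n)
      = lam ^ q • (B q * (1 + E)) := by
    have hsplit : (∑ i ∈ Finset.Icc p q, lam ^ i • B i : EucOp n)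
        = lam ^ q • B q + ∑ i ∈ Finset.Ico p q, lam ^ i • B i := by
      rw [← Finset.Ico_insert_right (le_of_lt hpq), Finset.sum_insert Finset.right_notMem_Ico]
    rw [hsplit, mul_add, mul_one, hEdef, Finset.mul_sum, smul_add]
    congr 1
    rw [Finset.smul_sum]
    refine Finset.sum_congr rfl fun i hi => ?_
    rw [mul_smul_comm, ← mul_assoc, hC, one_mul, smul_smul, ← zpow_add₀ hlam]
    congr 2
    ring
  -- hence the sum is a unit
  have hTunit : IsUnit (∑ i ∈ Finset.Icc p q, lam ^ i • B i : EucOp n) := by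
    rw [hkey]
    have h1 : IsUnit ((lam ^ q) • (1 : EucOp n)) := by
      refine ⟨⟨(lam ^ q) • (1 : EucOp n), (lam ^ q)⁻¹ • (1 : EucOp n), ?_, ?_⟩, rfl⟩
      · rw [smul_mul_smul_comm, one_mul, mul_inv_cancel₀ (zpow_ne_zero q hlam), one_smul]
      · rw [smul_mul_smul_comm, one_mul, inv_mul_cancel₀ (zpow_ne_zero q hlam), one_smul]
    have := h1.mul (hBqU.mul hunit1)
    rwa [smul_mul_assoc, one_mul] at this
  -- contradiction with det = 0
  obtain ⟨u, hu⟩ := hTunit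
  have hmul : ((u : EucOp n) * (↑u⁻¹ : EucOp n)) = 1 := by
    rw [← Units.val_mul, mul_inv_cancel, Units.val_one]
  have hmul' : ((↑u⁻¹ : EucOp n) * (u : EucOp n)) = 1 := by
    rw [← Units.val_mul, inv_mul_cancel, Units.val_one]
  have hLunit : IsUnit ((∑ i ∈ Finset.Icc p q, lam ^ i • B i : EucOp n).toLinearMap) := by
    rw [← hu]
    refine ⟨⟨(u : EucOp n).toLinearMap, (↑u⁻¹ : EucOp n).toLinearMap, ?_, ?_⟩, rfl⟩
    · refine LinearMap.ext fun x => ?_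
      have := congrArg (fun f : EucOp n => f x) hmul
      simpa only [ContinuousLinearMap.mul_apply, ContinuousLinearMap.one_apply,
        Module.End.mul_apply, Module.End.one_apply, ContinuousLinearMap.coe_coe] using this
    · refine LinearMap.ext fun x => ?_
      have := congrArg (fun f : EucOp n => f x) hmul'
      simpa only [ContinuousLinearMap.mul_apply, ContinuousLinearMap.one_apply,
        Module.End.mul_apply, Module.End.one_apply, ContinuousLinearMap.coe_coe] using this
  exact (LinearMap.isUnit_det _ hLunit).ne_zero hdet

/-- if `‖B_i‖ ≤ 1` for `p ≤ i ≤ q`, `‖B_p‖ = ‖B_q‖ = 1`, and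
`B_p, B_q` are invertible, then every nonzero `λ` with
`det(∑_{i=p}^q B_i λ^i) = 0` satisfies `(1+κ(B_p))⁻¹ < |λ| < 1+κ(B_q)`. -/
theorem statement10 (n : ℕ) (hn : 1 ≤ n) (p q : ℤ) (hpq : p < q)
    (B : ℤ → EucOp n)
    (hbd : ∀ i : ℤ, p ≤ i → i ≤ q → ‖B i‖ ≤ 1)
    (hBp : ‖B p‖ = 1) (hBq : ‖B q‖ = 1)
    (hBpU : IsUnit (B p)) (hBqU : IsUnit (B q))
    (lam : ℂ) (hlam : lam ≠ 0)
    (hdet : LinearMap.det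
      (∑ i ∈ Finset.Icc p q, lam ^ i • B i : EucOp n).toLinearMap = 0) :
    (1 + kappa (B p))⁻¹ < ‖lam‖ ∧ ‖lam‖ < 1 + kappa (B q) := by
  constructor
  · -- lower bound, via the reversed polynomial evaluated at lam⁻¹
    have hsum : (∑ i ∈ Finset.Icc (-q) (-p), (lam⁻¹) ^ i • B (-i) : EucOp n)
        = ∑ i ∈ Finset.Icc p q, lam ^ i • B i := by
      refine Finset.sum_nbij' (fun i => -i) (fun i => -i) ?_ ?_ ?_ ?_ ?_
      · intro i hi
        simp only [Finset.mem_Icc] at hi ⊢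
        omega
      · intro i hi
        simp only [Finset.mem_Icc] at hi ⊢
        omega
      · intro i _; exact neg_neg i
      · intro i _; exact neg_neg i
      · intro i _
        show lam⁻¹ ^ i • B (-i) = lam ^ (-i) • B (-i)
        rw [inv_zpow, ← zpow_neg]
    have hdet2 : LinearMap.det
        (∑ i ∈ Finset.Icc (-q) (-p), (lam⁻¹) ^ i • B (-i) : EucOp n).toLinearMap = 0 := by
      rw [hsum]; exact hdet
    have hub := upper_bound n hn (-q) (-p) (by omega) (fun i => B (-i))
      (fun i h1 h2 => hbd (-i) (by omega) (by omega))
      (by show ‖B (- -p)‖ = 1; rw [neg_neg]; exact hBp)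
      (by show IsUnit (B (- -p)); rw [neg_neg]; exact hBpU)
      lam⁻¹ (inv_ne_zero hlam) hdet2
    simp only [neg_neg] at hub
    have hkpos : 0 < 1 + kappa (B p) := by
      have : 0 ≤ kappa (B p) := mul_nonneg (norm_nonneg _) (norm_nonneg _)
      linarith
    have hlampos : 0 < ‖lam‖ := norm_pos_iff.2 hlam
    rw [norm_inv] at hub
    exact (inv_lt_comm₀ hlampos hkpos).1 hub
  · exact upper_bound n hn p q hpq B hbd hBq hBqU lam hlam hdet
end

section
/- Let p < q be integers, m = q − p, and let B_p, …, B_q be n×n complex matrices with ‖B_i‖ ≤ 1 for all i and ‖B_p‖ = ‖B_q‖ = 1. Set S(μ) = ∑_{i=p}^{q} B_i μ^i. (a) If B_p is invertible and 0 < |μ| ≤ (1 + κ(B_p))^{−1}, then S(μ) is invertible and ‖S(μ)^{−1}‖ ≤ κ(B_p)·|μ|^{−p}·(1 − |μ|) / (1 − |μ|·(1 + κ(B_p)(1 − |μ|^{m}))). (b) If B_q is invertible and |μ| ≥ 1 + κ(B_q), then S(μ) is invertible and ‖S(μ)^{−1}‖ ≤ κ(B_q)·|μ|^{−q}·(|μ|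 − 1) / (|μ| − 1 − κ(B_q)(1 − |μ|^{−m})). -/
-- geometric reindex lemmas
lemma aux_geomA (x : ℝ) (p q : ℤ) :
    ∑ i ∈ Finset.Ioc p q, x ^ (i - p) =
      ∑ j ∈ Finset.range (q - p).toNat, x ^ (j + 1) := by
  refine Finset.sum_nbij' (fun i => (i - p - 1).toNat) (fun j => p + 1 + j) ?_ ?_ ?_ ?_ ?_
  · intro a ha
    simp only [Finset.mem_Ioc] at ha
    simp only [Finset.mem_range]
    omega
  · intro a ha
    simp only [Finset.mem_range] at ha
    simp only [Finset.mem_Ioc]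
    omega
  · intro a ha; simp only [Finset.mem_Ioc] at ha
    show p + 1 + ((a - p - 1).toNat : ℤ) = a
    omega
  · intro a ha; simp only [Finset.mem_range] at ha
    show ((p + 1 + (a:ℤ)) - p - 1).toNat = a
    omega
  · intro a ha
    simp only [Finset.mem_Ioc] at ha
    rw [← zpow_natCast x ((a - p - 1).toNat + 1)]
    congr 1
    omega

lemma aux_geomB (x : ℝ) (p q : ℤ) :
    ∑ i ∈ Finset.Ico p q, x ^ (q - i) =
      ∑ j ∈ Finset.range (q - p).toNat, x ^ (j + 1) := by
  refine Finset.sum_nbij' (fun i => (q - i - 1).toNat) (fun j => q - 1 - j) ?_ ?_ ?_ ?_ ?_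
  · intro a ha
    simp only [Finset.mem_Ico] at ha
    simp only [Finset.mem_range]
    omega
  · intro a ha
    simp only [Finset.mem_range] at ha
    simp only [Finset.mem_Ico]
    omega
  · intro a ha; simp only [Finset.mem_Ico] at ha
    show q - 1 - ((q - a - 1).toNat : ℤ) = a
    omega
  · intro a ha; simp only [Finset.mem_range] at ha
    show (q - (q - 1 - (a:ℤ)) - 1).toNat = a
    omega
  · intro a ha
    simp only [Finset.mem_Ico] at ha
    rw [← zpow_natCast x ((q - a - 1).toNat + 1)]
    congr 1
    omega

lemma aux_range_geom (x : ℝ) (hx : x ≠ 1) (m : ℕ) :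
    ∑ j ∈ Finset.range m, x ^ (j + 1) = x * (1 - x ^ m) / (1 - x) := by
  have h := geom_sum_eq hx m
  have h2 : ∑ j ∈ Finset.range m, x ^ (j + 1) = x * ∑ j ∈ Finset.range m, x ^ j := by
    rw [Finset.mul_sum]
    exact Finset.sum_congr rfl fun j _ => by ring
  rw [h2, h]
  have h3 : x - 1 ≠ 0 := sub_ne_zero.mpr hx
  have h4 : (1:ℝ) - x ≠ 0 := sub_ne_zero.mpr (Ne.symm hx)
  rw [mul_div_assoc', div_eq_div_iff h3 h4]
  ring

-- key perturbation lemma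
lemma key_lemma {n : ℕ} [Nontrivial (EuclideanSpace ℂ (Fin n))]
    (A R : EucOp n) (hA : IsUnit A) (c : ℂ) (hc : c ≠ 0) (r : ℝ)
    (hRr : ‖R‖ ≤ r) (hr : ‖Ring.inverse A‖ * r < 1) :
    IsUnit (c • (A + R)) ∧
    ‖Ring.inverse (c • (A + R))‖ ≤
      ‖c‖⁻¹ * ‖Ring.inverse A‖ / (1 - ‖Ring.inverse A‖ * r) := by
  set A' := Ring.inverse A with hA'
  have hA'nn : (0:ℝ) ≤ ‖A'‖ := norm_nonneg _
  have hEr : ‖A' * R‖ ≤ ‖A'‖ * r :=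
    le_trans (norm_mul_le _ _) (mul_le_mul_of_nonneg_left hRr hA'nn)
  have hE : ‖-(A' * R)‖ < 1 := by rw [norm_neg]; exact lt_of_le_of_lt hEr hr
  let u1 : (EucOp n)ˣ := Units.oneSub _ hE
  have hu1v : (u1 : EucOp n) = 1 + A' * R := by
    show 1 - -(A' * R) = 1 + A' * R
    rw [sub_neg_eq_add]
  let uc : (EucOp n)ˣ :=
    Units.map (algebraMap ℂ (EucOp n)).toMonoidHom (Units.mk0 c hc)
  have hucv : (uc : EucOp n) = algebraMap ℂ (EucOp n) c := rfl
  have hucinv : ((uc⁻¹ : (EucOp n)ˣ) : EucOp n) = algebraMap ℂ (EucOp n) c⁻¹ := by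
    show ((Units.map (algebraMap ℂ (EucOp n)).toMonoidHom (Units.mk0 c hc))⁻¹ :
      (EucOp n)ˣ).val = _
    rw [← map_inv]
    simp
  let U : (EucOp n)ˣ := uc * hA.unit * u1
  have hSU : c • (A + R) = ↑U := by
    have h1 : (U : EucOp n) = algebraMap ℂ (EucOp n) c * (A * (1 + A' * R)) := by
      simp only [U, Units.val_mul, hucv, hu1v, hA.unit_spec, mul_assoc]
    have h2 : A * (1 + A' * R) = A + R := by
      rw [mul_add, mul_one, ← mul_assoc, Ring.mul_inverse_cancel A hA, one_mul]
    rw [h1, h2, ← Algebra.smul_def]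
  have hinv : Ring.inverse (c • (A + R)) = ((U⁻¹ : (EucOp n)ˣ) : EucOp n) := by
    rw [hSU, Ring.inverse_unit]
  -- norm of u1⁻¹
  have hu1inv : ((u1⁻¹ : (EucOp n)ˣ) : EucOp n) = ∑' k : ℕ, (-(A' * R)) ^ k := rfl
  have hnorm_u1 : ‖((u1⁻¹ : (EucOp n)ˣ) : EucOp n)‖ ≤ (1 - ‖A'‖ * r)⁻¹ := by
    rw [hu1inv]
    have hbd : ‖∑' k : ℕ, (-(A' * R)) ^ k‖ ≤ (1 - ‖-(A' * R)‖)⁻¹ := by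
      refine tsum_of_norm_bounded (hasSum_geometric_of_lt_one (norm_nonneg _) hE) ?_
      intro k
      exact norm_pow_le _ _
    refine le_trans hbd ?_
    have h1 : 0 < 1 - ‖A'‖ * r := by linarith
    have h2 : 1 - ‖A'‖ * r ≤ 1 - ‖-(A' * R)‖ := by
      rw [norm_neg]; linarith
    exact inv_anti₀ h1 h2
  have hAiv : ((hA.unit⁻¹ : (EucOp n)ˣ) : EucOp n) = A' := by
    rw [hA']
    conv_rhs => rw [← hA.unit_spec]
    rw [Ring.inverse_unit]
  have hnorm_Ainv : ‖((hA.unit⁻¹ : (EucOp n)ˣ) : EucOp n)‖ = ‖A'‖ := by rw [hAiv]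
  have hnorm_uc : ‖((uc⁻¹ : (EucOp n)ˣ) : EucOp n)‖ = ‖c‖⁻¹ := by
    rw [hucinv, norm_algebraMap', norm_inv]
  refine ⟨⟨U, hSU.symm⟩, ?_⟩
  rw [hinv]
  have hUinv : ((U⁻¹ : (EucOp n)ˣ) : EucOp n) =
      ((u1⁻¹ : (EucOp n)ˣ) : EucOp n) * (((hA.unit⁻¹ : (EucOp n)ˣ) : EucOp n) *
        ((uc⁻¹ : (EucOp n)ˣ) : EucOp n)) := by
    simp only [U, mul_inv_rev, Units.val_mul]
  rw [hUinv]
  have h1 : 0 < 1 - ‖A'‖ * r := by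
    have := (norm_nonneg R).trans hRr
    nlinarith [hA'nn]
  calc ‖((u1⁻¹ : (EucOp n)ˣ) : EucOp n) * (((hA.unit⁻¹ : (EucOp n)ˣ) : EucOp n) *
        ((uc⁻¹ : (EucOp n)ˣ) : EucOp n))‖
      ≤ ‖((u1⁻¹ : (EucOp n)ˣ) : EucOp n)‖ * (‖((hA.unit⁻¹ : (EucOp n)ˣ) : EucOp n)‖ *
        ‖((uc⁻¹ : (EucOp n)ˣ) : EucOp n)‖) := by
        refine le_trans (norm_mul_le _ _) ?_
        gcongr
        exact norm_mul_le _ _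
    _ = ‖((u1⁻¹ : (EucOp n)ˣ) : EucOp n)‖ * (‖A'‖ * ‖c‖⁻¹) := by
        rw [hnorm_Ainv, hnorm_uc]
    _ ≤ (1 - ‖A'‖ * r)⁻¹ * (‖A'‖ * ‖c‖⁻¹) := by
        exact mul_le_mul_of_nonneg_right hnorm_u1 (by positivity)
    _ = ‖c‖⁻¹ * ‖A'‖ / (1 - ‖A'‖ * r) := by
        rw [div_eq_mul_inv]; ring


set_option maxHeartbeats 1000000 in
/-- lower bounds on `S(μ) = ∑_{i=p}^q B_i μ^i`: (a) if `B_p` is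
invertible and `0 < |μ| ≤ (1+κ(B_p))⁻¹` then `S(μ)` is invertible with the
stated bound on `‖S(μ)⁻¹‖`; (b) if `B_q` is invertible and `|μ| ≥ 1+κ(B_q)`
then `S(μ)` is invertible with the stated bound on `‖S(μ)⁻¹‖`. -/
theorem statement12 (n : ℕ) (hn : 1 ≤ n) (p q : ℤ) (hpq : p < q)
    (B : ℤ → EucOp n)
    (hbd : ∀ i : ℤ, p ≤ i → i ≤ q → ‖B i‖ ≤ 1)
    (hBp : ‖B p‖ = 1) (hBq : ‖B q‖ = 1) :
    (∀ μ : ℂ, IsUnit (B p) → 0 < ‖μ‖ → ‖μ‖ ≤ (1 + kappa (B p))⁻¹ →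
      IsUnit (∑ i ∈ Finset.Icc p q, μ ^ i • B i) ∧
      ‖Ring.inverse (∑ i ∈ Finset.Icc p q, μ ^ i • B i)‖ ≤
        kappa (B p) * ‖μ‖ ^ (-p) * (1 - ‖μ‖) /
          (1 - ‖μ‖ * (1 + kappa (B p) * (1 - ‖μ‖ ^ (q - p))))) ∧
    (∀ μ : ℂ, IsUnit (B q) → 1 + kappa (B q) ≤ ‖μ‖ →
      IsUnit (∑ i ∈ Finset.Icc p q, μ ^ i • B i) ∧
      ‖Ring.inverse (∑ i ∈ Finset.Icc p q, μ ^ i • B i)‖ ≤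
        kappa (B q) * ‖μ‖ ^ (-q) * (‖μ‖ - 1) /
          (‖μ‖ - 1 - kappa (B q) * (1 - ‖μ‖ ^ (-(q - p))))) := by
  haveI : Nonempty (Fin n) := ⟨⟨0, hn⟩⟩
  haveI : Nontrivial (EuclideanSpace ℂ (Fin n)) := inferInstance
  set m := (q - p).toNat with hmdef
  have hm : (m : ℤ) = q - p := Int.toNat_of_nonneg (by omega)
  constructor
  · -- Part (a)
    intro μ hA hμ0 hμ1
    obtain ⟨K, hK⟩ : ∃ K, ‖Ring.inverse (B p)‖ = K := ⟨_, rfl⟩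
    obtain ⟨x, hx⟩ : ∃ x, ‖μ‖ = x := ⟨_, rfl⟩
    have hκeq : kappa (B p) = K := by rw [kappa, hBp, one_mul, hK]
    rw [hx] at hμ0
    rw [hκeq, hx] at hμ1 ⊢
    have hμne : μ ≠ 0 := by
      intro h; rw [h, norm_zero] at hx; rw [← hx] at hμ0; exact lt_irrefl 0 hμ0
    have hκ1 : 1 ≤ K := by
      have h1 : (Ring.inverse (B p)) * (B p) = 1 := Ring.inverse_mul_cancel _ hA
      have h2 := norm_mul_le (Ring.inverse (B p)) (B p)
      rw [h1, norm_one, hBp, mul_one, hK] at h2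
      exact h2
    have hκ0 : (0:ℝ) < K := lt_of_lt_of_le one_pos hκ1
    have h1κ : (0:ℝ) < 1 + K := by linarith
    have hxκ : x * (1 + K) ≤ 1 := by
      calc x * (1 + K) ≤ (1 + K)⁻¹ * (1 + K) :=
            mul_le_mul_of_nonneg_right hμ1 h1κ.le
        _ = 1 := inv_mul_cancel₀ h1κ.ne'
    have hx1 : x < 1 := by nlinarith
    have hxm : (0:ℝ) < x ^ m := pow_pos hμ0 m
    have hsplit : (∑ i ∈ Finset.Icc p q, μ ^ i • B i) =
        μ ^ p • (B p + ∑ i ∈ Finset.Ioc p q, μ ^ (i - p) • B i) := by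
      rw [smul_add, Finset.smul_sum, ← Finset.Ioc_insert_left hpq.le,
        Finset.sum_insert Finset.left_notMem_Ioc]
      congr 1
      refine Finset.sum_congr rfl fun i hi => ?_
      rw [smul_smul, ← zpow_add₀ hμne, show p + (i - p) = i by ring]
    have hRr : ‖∑ i ∈ Finset.Ioc p q, μ ^ (i - p) • B i‖ ≤ x * (1 - x ^ m) / (1 - x) := by
      refine le_trans (norm_sum_le _ _) ?_
      have hstep : ∀ i ∈ Finset.Ioc p q, ‖μ ^ (i - p) • B i‖ ≤ x ^ (i - p) := by
        intro i hi
        have hi' := Finset.mem_Ioc.mp hi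
        refine le_trans (ContinuousLinearMap.opNorm_smul_le _ _) ?_
        rw [norm_zpow, hx]
        calc x ^ (i - p) * ‖B i‖ ≤ x ^ (i - p) * 1 :=
              mul_le_mul_of_nonneg_left (hbd i (by omega) hi'.2) (zpow_nonneg hμ0.le _)
          _ = x ^ (i - p) := mul_one _
      refine le_trans (Finset.sum_le_sum hstep) (le_of_eq ?_)
      rw [aux_geomA x p q, ← hmdef, aux_range_geom x hx1.ne m]
    have hr : K * (x * (1 - x ^ m) / (1 - x)) < 1 := by
      rw [mul_div_assoc', div_lt_one (by linarith : (0:ℝ) < 1 - x)]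
      nlinarith [mul_pos (mul_pos hκ0 hμ0) hxm]
    have hkey := key_lemma (B p) _ hA (μ ^ p) (zpow_ne_zero p hμne)
      (x * (1 - x ^ m) / (1 - x)) hRr (by rw [hK]; exact hr)
    rw [hsplit]
    refine ⟨hkey.1, le_trans hkey.2 (le_of_eq ?_)⟩
    rw [hK, norm_zpow, hx, ← zpow_neg]
    have hD : (0:ℝ) < 1 - x - K * x * (1 - x ^ m) := by
      nlinarith [mul_pos (mul_pos hκ0 hμ0) hxm]
    have hq' : x ^ (q - p) = x ^ m := by rw [← hm, zpow_natCast]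
    rw [hq']
    have h1x : (1:ℝ) - x ≠ 0 := by linarith
    have e1 : 1 - K * (x * (1 - x ^ m) / (1 - x)) =
        (1 - x - K * x * (1 - x ^ m)) / (1 - x) := by
      field_simp
    have e2 : 1 - x * (1 + K * (1 - x ^ m)) = 1 - x - K * x * (1 - x ^ m) := by ring
    rw [e1, e2, div_div_eq_mul_div]
    ring
  · -- Part (b)
    intro μ hA hμ1
    obtain ⟨K, hK⟩ : ∃ K, ‖Ring.inverse (B q)‖ = K := ⟨_, rfl⟩
    obtain ⟨x, hx⟩ : ∃ x, ‖μ‖ = x := ⟨_, rfl⟩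
    have hκeq : kappa (B q) = K := by rw [kappa, hBq, one_mul, hK]
    rw [hκeq, hx] at hμ1 ⊢
    have hκ1 : 1 ≤ K := by
      have h1 : (Ring.inverse (B q)) * (B q) = 1 := Ring.inverse_mul_cancel _ hA
      have h2 := norm_mul_le (Ring.inverse (B q)) (B q)
      rw [h1, norm_one, hBq, mul_one, hK] at h2
      exact h2
    have hκ0 : (0:ℝ) < K := lt_of_lt_of_le one_pos hκ1
    have hx1 : 1 < x := by linarith
    have hx0 : (0:ℝ) < x := by linarith
    have hμne : μ ≠ 0 := by
      intro h; rw [h, norm_zero] at hx; rw [← hx] at hx0; exact lt_irrefl 0 hx0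
    have hy0 : (0:ℝ) < x⁻¹ := inv_pos.mpr hx0
    have hxy : x * x⁻¹ = 1 := mul_inv_cancel₀ hx0.ne'
    have hy1 : x⁻¹ < 1 := by nlinarith
    have hym : (0:ℝ) < x⁻¹ ^ m := pow_pos hy0 m
    have hsplit : (∑ i ∈ Finset.Icc p q, μ ^ i • B i) =
        μ ^ q • (B q + ∑ i ∈ Finset.Ico p q, μ ^ (i - q) • B i) := by
      rw [smul_add, Finset.smul_sum, ← Finset.Ico_insert_right hpq.le,
        Finset.sum_insert Finset.right_notMem_Ico]
      congr 1
      refine Finset.sum_congr rfl fun i hi => ?_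
      rw [smul_smul, ← zpow_add₀ hμne, show q + (i - q) = i by ring]
    have hRr : ‖∑ i ∈ Finset.Ico p q, μ ^ (i - q) • B i‖ ≤
        x⁻¹ * (1 - x⁻¹ ^ m) / (1 - x⁻¹) := by
      refine le_trans (norm_sum_le _ _) ?_
      have hstep : ∀ i ∈ Finset.Ico p q, ‖μ ^ (i - q) • B i‖ ≤ x⁻¹ ^ (q - i) := by
        intro i hi
        have hi' := Finset.mem_Ico.mp hi
        refine le_trans (ContinuousLinearMap.opNorm_smul_le _ _) ?_
        rw [norm_zpow, hx, show i - q = -(q - i) by ring, zpow_neg, ← inv_zpow]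
        calc x⁻¹ ^ (q - i) * ‖B i‖ ≤ x⁻¹ ^ (q - i) * 1 :=
              mul_le_mul_of_nonneg_left (hbd i hi'.1 (by omega)) (zpow_nonneg hy0.le _)
          _ = x⁻¹ ^ (q - i) := mul_one _
      refine le_trans (Finset.sum_le_sum hstep) (le_of_eq ?_)
      rw [aux_geomB x⁻¹ p q, ← hmdef, aux_range_geom x⁻¹ hy1.ne m]
    have hKy : K * x⁻¹ ≤ 1 - x⁻¹ := by
      have h5 : K * x⁻¹ ≤ (x - 1) * x⁻¹ :=
        mul_le_mul_of_nonneg_right (by linarith) hy0.le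
      calc K * x⁻¹ ≤ (x - 1) * x⁻¹ := h5
        _ = 1 - x⁻¹ := by rw [sub_mul, hxy, one_mul]
    have hr : K * (x⁻¹ * (1 - x⁻¹ ^ m) / (1 - x⁻¹)) < 1 := by
      rw [mul_div_assoc', div_lt_one (by linarith : (0:ℝ) < 1 - x⁻¹)]
      nlinarith [mul_pos (mul_pos hκ0 hy0) hym]
    have hkey := key_lemma (B q) _ hA (μ ^ q) (zpow_ne_zero q hμne)
      (x⁻¹ * (1 - x⁻¹ ^ m) / (1 - x⁻¹)) hRr (by rw [hK]; exact hr)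
    rw [hsplit]
    refine ⟨hkey.1, le_trans hkey.2 (le_of_eq ?_)⟩
    rw [hK, norm_zpow, hx, ← zpow_neg]
    have hqm : x ^ (-(q - p)) = x⁻¹ ^ m := by
      rw [← hm, zpow_neg, zpow_natCast, ← inv_pow]
    rw [hqm]
    have hD : (0:ℝ) < x - 1 - K * (1 - x⁻¹ ^ m) := by nlinarith
    have h1y : (1:ℝ) - x⁻¹ ≠ 0 := by linarith
    have e1 : 1 - K * (x⁻¹ * (1 - x⁻¹ ^ m) / (1 - x⁻¹)) =
        (x - 1 - K * (1 - x⁻¹ ^ m)) / (x - 1) := by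
      have hxne : (x:ℝ) ≠ 0 := hx0.ne'
      have hx1ne : (x:ℝ) - 1 ≠ 0 := by linarith
      field_simp
    rw [e1, div_div_eq_mul_div]
    ring
end

section
/- Let c > 0 and δ > 0 with δ ≤ (1 + 2c)^{−2}. Define the quadratic polynomial p(r) = r² − (2 + (1−δ)/(δ(1+c)))·r + 1/δ, and set f = ((1+2c)δ + 1 − √((1−δ)(1 − (1+2c)²δ))) / (2δ(1+c)) and g = 1/(δf). Then p(f) = p(g) = 0; moreover 1 < 1 + c ≤ f ≤ g, and 1/(f−1) + 1/(g−1) = 1/c. -/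
/-- for `c > 0` and `0 < δ ≤ (1+2c)^{−2}`, the quadratic
`p(r) = r² − (2 + (1−δ)/(δ(1+c)))r + 1/δ` has roots
`f = ((1+2c)δ + 1 − √((1−δ)(1−(1+2c)²δ)))/(2δ(1+c))` and `g = 1/(δf)`, with
`1 < 1+c ≤ f ≤ g` and `1/(f−1) + 1/(g−1) = 1/c`. -/
theorem statement13 (c δ : ℝ) (hc : 0 < c) (hδ : 0 < δ)
    (hδc : δ ≤ ((1 + 2 * c) ^ 2)⁻¹) :
    ∀ f g : ℝ,
      f = ((1 + 2 * c) * δ + 1 -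
            Real.sqrt ((1 - δ) * (1 - (1 + 2 * c) ^ 2 * δ))) / (2 * δ * (1 + c)) →
      g = 1 / (δ * f) →
      (f ^ 2 - (2 + (1 - δ) / (δ * (1 + c))) * f + 1 / δ = 0 ∧
       g ^ 2 - (2 + (1 - δ) / (δ * (1 + c))) * g + 1 / δ = 0) ∧
      (1 < 1 + c ∧ 1 + c ≤ f ∧ f ≤ g) ∧
      1 / (f - 1) + 1 / (g - 1) = 1 / c := by
  intro f g hf hg
  set s := Real.sqrt ((1 - δ) * (1 - (1 + 2 * c) ^ 2 * δ)) with hs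
  have ha : (0:ℝ) < 1 + 2 * c := by linarith
  have ha2 : (0:ℝ) < (1 + 2 * c) ^ 2 := by positivity
  have hy : 0 ≤ 1 - (1 + 2 * c) ^ 2 * δ := by
    have h1 : ((1 + 2 * c) ^ 2)⁻¹ * (1 + 2 * c) ^ 2 = 1 := inv_mul_cancel₀ (ne_of_gt ha2)
    nlinarith [mul_le_mul_of_nonneg_right hδc (le_of_lt ha2)]
  have hx : 0 ≤ 1 - δ := by nlinarith
  have hs0 : 0 ≤ s := Real.sqrt_nonneg _
  have hs2 : s ^ 2 = (1 - δ) * (1 - (1 + 2 * c) ^ 2 * δ) := Real.sq_sqrt (by positivity)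
  have hs1 : s ≤ 1 := by nlinarith [sq_nonneg (s - 1)]
  have hcp : (0:ℝ) < 1 + c := by linarith
  have hden : (0:ℝ) < 2 * δ * (1 + c) := by positivity
  have hδne : δ ≠ 0 := ne_of_gt hδ
  have hcpne : (1 + c) ≠ 0 := ne_of_gt hcp
  have hDne : (2 * δ * (1 + c)) ≠ 0 := ne_of_gt hden
  have hfpos : 0 < f := by
    rw [hf]
    apply div_pos _ hden
    nlinarith
  have hfne : f ≠ 0 := ne_of_gt hfpos
  -- AM-GM: s ≤ ((1-δ) + (1-(1+2c)²δ))/2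
  have hamgm : s ≤ ((1 - δ) + (1 - (1 + 2 * c) ^ 2 * δ)) / 2 := by
    nlinarith [sq_nonneg ((1 - δ) - (1 - (1 + 2 * c) ^ 2 * δ)), sq_nonneg s]
  have hcf : 1 + c ≤ f := by
    rw [hf, le_div_iff₀ hden]
    nlinarith
  have hf1 : 1 < f := by linarith
  have hD : (2 * δ * (1 + c)) ^ 2 * (f ^ 2 - (2 + (1 - δ) / (δ * (1 + c))) * f + 1 / δ)
      = s ^ 2 - (1 - δ) * (1 - (1 + 2 * c) ^ 2 * δ) := by
    rw [hf]; field_simp; ring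
  have hpf : f ^ 2 - (2 + (1 - δ) / (δ * (1 + c))) * f + 1 / δ = 0 := by
    have h0 : (2 * δ * (1 + c)) ^ 2 *
        (f ^ 2 - (2 + (1 - δ) / (δ * (1 + c))) * f + 1 / δ) = 0 := by
      rw [hD, hs2]; ring
    exact (mul_eq_zero.mp h0).resolve_left (pow_ne_zero 2 hDne)
  have hpf' : δ * f ^ 2 - δ * (2 + (1 - δ) / (δ * (1 + c))) * f + 1 = 0 := by
    have : δ * f ^ 2 - δ * (2 + (1 - δ) / (δ * (1 + c))) * f + 1
        = δ * (f ^ 2 - (2 + (1 - δ) / (δ * (1 + c))) * f + 1 / δ) := by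
      field_simp
    rw [this, hpf, mul_zero]
  have hgBf : g = (2 + (1 - δ) / (δ * (1 + c))) - f := by
    rw [hg, div_eq_iff (mul_ne_zero hδne hfne)]
    linear_combination hpf'
  have hpg : g ^ 2 - (2 + (1 - δ) / (δ * (1 + c))) * g + 1 / δ = 0 := by
    rw [hgBf]; ring_nf; ring_nf at hpf; linarith
  have hfg : f ≤ g := by
    rw [hgBf]
    have hfe : f = ((1 + 2 * c) * δ + 1) / (2 * δ * (1 + c)) - s / (2 * δ * (1 + c)) := by
      rw [hf]; ring
    rw [hfe]
    have h2 : (2 + (1 - δ) / (δ * (1 + c)))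
        = 2 * (((1 + 2 * c) * δ + 1) / (2 * δ * (1 + c))) := by
      field_simp; ring
    rw [h2]
    have : 0 ≤ s / (2 * δ * (1 + c)) := by positivity
    linarith
  have hg1 : 1 < g := hf1.trans_le hfg
  refine ⟨⟨hpf, hpg⟩, ⟨by linarith, hcf, hfg⟩, ?_⟩
  have h1 : f - 1 ≠ 0 := sub_ne_zero.mpr (ne_of_gt hf1)
  have h2 : g - 1 ≠ 0 := sub_ne_zero.mpr (ne_of_gt hg1)
  have hprod2 : δ * (f * g) = 1 := by
    rw [hg]; field_simp
  have hsum2 : δ * (1 + c) * (f + g) = 2 * (δ * (1 + c)) + (1 - δ) := by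
    rw [hgBf]; field_simp; ring
  have hkey : (1 + c) * (f + g) = 2 * (1 + c) + f * g - 1 := by
    linear_combination (f * g) * hsum2 + (2 * c + 1 - (1 + c) * (f + g)) * hprod2
  rw [div_add_div _ _ h1 h2, div_eq_div_iff (mul_ne_zero h1 h2) (ne_of_gt hc)]
  linear_combination hkey
end

section
/- Let n ≥ 1, let B : ℤ → M_n(ℂ), let k < K be integers, α > 0, δ₋, δ₊ ∈ (0,1), and set c = κ(B_K) and M := ‖B_k‖α^k. Assume: B_k and B_K are invertible; ‖B_k‖α^k = ‖B_K‖α^K = M > 0; ‖B_i‖α^i ≤ M for all i ∈ ℤ; ‖B_i‖α^i ≤ M·δ₋^{k−i} for all i < k; ‖B_i‖α^i ≤ M·δ₊^{i−K} for all i > K; and δ₊ ≤ (1 + 2c)^{−2}. Then for every λ ∈ ℂ with (1 + 2c)·α < |λ| < (1 + 2c)^{−1}·α/δ₊, the series ∑_{i∈ℤ} B_i λ^i converges absolutely and its sum F(λ) is an invertible matrix; in particular F has no eigenvalue in the open annulus {λ : (1+2c)α < |λ| < (1+2c)^{−1}α/δ₊}. -/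
private lemma statement14.norm_zpow_smul {n : ℕ} (lam : ℂ) (i : ℤ) (Bi : EucOp n) :
    ‖lam ^ i • Bi‖ = ‖lam‖ ^ i * ‖Bi‖ := by
  rw [norm_smul (lam ^ i) Bi, norm_zpow]

private lemma statement14.aux_ratio {x c : ℝ} (hx0 : 0 ≤ x) (hc : 0 < c)
    (h : x * (1 + 2 * c) < 1) : x * (1 - x)⁻¹ < (2 * c)⁻¹ := by
  have hx1 : x < 1 := by nlinarith
  have h1x : 0 < 1 - x := by linarith
  rw [← div_eq_mul_inv, div_lt_iff₀ h1x, inv_mul_eq_div, lt_div_iff₀ (by linarith : (0:ℝ) < 2 * c)]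
  nlinarith

set_option maxHeartbeats 1000000 in
set_option synthInstance.maxHeartbeats 400000 in

/-- eigenvalue exclusion annulus. With `α` a tropical root of
`x ↦ sup_i ‖B_i‖x^i` attained at indices `k < K`, `δ₊` the ratio with the next
tropical root, `c = κ(B_K)` and `δ₊ ≤ (1+2c)^{−2}`, the Laurent series
`F(λ) = ∑_i B_i λ^i` converges absolutely and is invertible for every `λ` in
the open annulus `(1+2c)α < |λ| < (1+2c)^{−1}α/δ₊`: `F` has no eigenvalue
there. -/
theorem statement14 (n : ℕ) (hn : 1 ≤ n) (B : ℤ → EucOp n)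
    (k K : ℤ) (hkK : k < K) (α δm δp : ℝ)
    (hα : 0 < α) (hδm0 : 0 < δm) (hδm1 : δm < 1) (hδp0 : 0 < δp) (hδp1 : δp < 1)
    (hBkU : IsUnit (B k)) (hBKU : IsUnit (B K))
    (hM : ‖B k‖ * α ^ k = ‖B K‖ * α ^ K)
    (hMpos : 0 < ‖B k‖ * α ^ k)
    (hall : ∀ i : ℤ, ‖B i‖ * α ^ i ≤ ‖B k‖ * α ^ k)
    (hleft : ∀ i : ℤ, i < k → ‖B i‖ * α ^ i ≤ (‖B k‖ * α ^ k) * δm ^ (k - i))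
    (hright : ∀ i : ℤ, K < i → ‖B i‖ * α ^ i ≤ (‖B k‖ * α ^ k) * δp ^ (i - K))
    (hsmall : δp ≤ ((1 + 2 * kappa (B K)) ^ 2)⁻¹)
    (lam : ℂ)
    (hlow : (1 + 2 * kappa (B K)) * α < ‖lam‖)
    (hhigh : ‖lam‖ < (1 + 2 * kappa (B K))⁻¹ * α / δp) :
    Summable (fun i : ℤ => ‖lam ^ i • B i‖) ∧
    IsUnit (∑' i : ℤ, lam ^ i • B i) := by
  set c := kappa (B K) with hcdef
  set M := ‖B k‖ * α ^ k with hMdef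
  have hBKpos : 0 < ‖B K‖ := by
    rcases (norm_nonneg (B K)).lt_or_eq with h | h
    · exact h
    · exfalso
      rw [hM, ← h, zero_mul] at hMpos
      exact lt_irrefl 0 hMpos
  -- condition number at least 1
  haveI : NeZero n := ⟨by omega⟩
  haveI : Nontrivial (EuclideanSpace ℂ (Fin n)) := inferInstance
  have hc1 : 1 ≤ c := by
    have h1 : (B K) * Ring.inverse (B K) = 1 := Ring.mul_inverse_cancel _ hBKU
    calc (1:ℝ) = ‖(1 : EucOp n)‖ := norm_one.symm
      _ = ‖(B K) * Ring.inverse (B K)‖ := by rw [h1]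
      _ ≤ ‖B K‖ * ‖Ring.inverse (B K)‖ := norm_mul_le _ _
      _ = c := rfl
  have hcpos : 0 < c := by linarith
  have h12c : (0:ℝ) < 1 + 2 * c := by linarith
  have hr0 : 0 < ‖lam‖ := lt_trans (mul_pos h12c hα) hlow
  have hlam0 : lam ≠ 0 := norm_pos_iff.mp hr0
  set β : ℝ := ‖lam‖ / α with hβdef
  have hβpos : 0 < β := div_pos hr0 hα
  have hβne : β ≠ 0 := ne_of_gt hβpos
  have hβgt : 1 + 2 * c < β := (lt_div_iff₀ hα).mpr hlow
  have hβ1 : 1 < β := by linarith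
  have hβinv1 : β⁻¹ < 1 := inv_lt_one_of_one_lt₀ hβ1
  have hβinv0 : (0:ℝ) ≤ β⁻¹ := inv_nonneg.mpr (le_of_lt hβpos)
  set q : ℝ := δp * β with hqdef
  have hq0 : 0 ≤ q := le_of_lt (mul_pos hδp0 hβpos)
  have hqlt : q < (1 + 2 * c)⁻¹ := by
    have h1 : ‖lam‖ * δp < (1 + 2 * c)⁻¹ * α := (lt_div_iff₀ hδp0).mp hhigh
    have h2 : q = ‖lam‖ * δp / α := by rw [hqdef, hβdef]; ring
    rw [h2, div_lt_iff₀ hα]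
    calc ‖lam‖ * δp < (1 + 2 * c)⁻¹ * α := h1
      _ = (1 + 2 * c)⁻¹ * α := rfl
  have hq1 : q < 1 := lt_of_lt_of_le hqlt (inv_le_one_of_one_le₀ (by linarith))
  -- norm rewriting
  have hnormi : ∀ i : ℤ, ‖lam ^ i • B i‖ = ‖B i‖ * α ^ i * β ^ i := by
    intro i
    rw [statement14.norm_zpow_smul, hβdef, div_zpow]
    have hαi : α ^ i ≠ 0 := zpow_ne_zero i (ne_of_gt hα)
    field_simp
  have hA : ∀ i : ℤ, ‖lam ^ i • B i‖ ≤ M * β ^ i := by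
    intro i
    rw [hnormi i]
    exact mul_le_mul_of_nonneg_right (hall i) (zpow_nonneg (le_of_lt hβpos) i)
  have hBc : ∀ i : ℤ, K < i → ‖lam ^ i • B i‖ ≤ M * β ^ K * q ^ (i - K) := by
    intro i hi
    rw [hnormi i]
    have hsplit : β ^ i = β ^ K * β ^ (i - K) := by
      rw [← zpow_add₀ hβne]; congr 1; ring
    calc ‖B i‖ * α ^ i * β ^ i ≤ M * δp ^ (i - K) * β ^ i :=
          mul_le_mul_of_nonneg_right (hright i hi) (zpow_nonneg (le_of_lt hβpos) i)
      _ = M * β ^ K * q ^ (i - K) := by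
          rw [hsplit, hqdef, mul_zpow]; ring
  set a : ℝ := M * β ^ K with hadef
  have hapos : 0 < a := mul_pos hMpos (zpow_pos hβpos K)
  -- geometric sums
  have hgeomL : HasSum (fun m : ℕ => a * β⁻¹ ^ (m + 1)) (a * β⁻¹ * (1 - β⁻¹)⁻¹) := by
    have h1 := (hasSum_geometric_of_lt_one hβinv0 hβinv1).mul_left (a * β⁻¹)
    have h2 : (fun m : ℕ => a * β⁻¹ ^ (m + 1)) = fun m : ℕ => a * β⁻¹ * β⁻¹ ^ m := by
      funext m; rw [pow_succ]; ring
    rw [h2]; exact h1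
  have hgeomR0 : HasSum (fun m : ℕ => a * q ^ m) (a * (1 - q)⁻¹) :=
    (hasSum_geometric_of_lt_one hq0 hq1).mul_left a
  have hgeomR : HasSum (fun m : ℕ => if m = 0 then (0:ℝ) else a * q ^ m)
      (a * q * (1 - q)⁻¹) := by
    have h1 : HasSum (fun m : ℕ => a * q * q ^ m) (a * q * (1 - q)⁻¹) :=
      (hasSum_geometric_of_lt_one hq0 hq1).mul_left (a * q)
    have h2 : (fun m : ℕ => (if (m + 1) = 0 then (0:ℝ) else a * q ^ (m + 1)))
        = fun m : ℕ => a * q * q ^ m := by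
      funext m; rw [if_neg (Nat.succ_ne_zero m), pow_succ]; ring
    have h3 := (hasSum_nat_add_iff
      (f := fun m : ℕ => if m = 0 then (0:ℝ) else a * q ^ m) 1).mp (by rw [h2]; exact h1)
    simpa using h3
  -- majorants over ℤ (centered so that index j corresponds to i = j + K)
  set H : ℤ → ℝ := Int.rec (fun m : ℕ => a * q ^ m) (fun m : ℕ => a * β⁻¹ ^ (m + 1)) with hHdef
  set H' : ℤ → ℝ := Int.rec (fun m : ℕ => if m = 0 then (0:ℝ) else a * q ^ m)
      (fun m : ℕ => a * β⁻¹ ^ (m + 1)) with hH'def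
  have hHsum : Summable H := hgeomR0.summable.int_rec hgeomL.summable
  have hH'sum : HasSum H' (a * q * (1 - q)⁻¹ + a * β⁻¹ * (1 - β⁻¹)⁻¹) :=
    hgeomR.int_rec hgeomL
  -- pointwise bounds
  have hnegcase : ∀ m : ℕ, ‖lam ^ (Int.negSucc m + K) • B (Int.negSucc m + K)‖
      ≤ a * β⁻¹ ^ (m + 1) := by
    intro m
    have h1 := hA (Int.negSucc m + K)
    have e : M * β ^ (Int.negSucc m + K) = a * β⁻¹ ^ (m + 1) := by
      have h2 : Int.negSucc m + K = K - ((m + 1 : ℕ) : ℤ) := by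
        rw [Int.negSucc_eq]; push_cast; ring
      rw [h2, zpow_sub₀ hβne, zpow_natCast, div_eq_mul_inv, inv_pow, hadef]
      ring
    rw [e] at h1; exact h1
  have hposcase : ∀ m : ℕ, 0 < m →
      ‖lam ^ ((m : ℤ) + K) • B ((m : ℤ) + K)‖ ≤ a * q ^ m := by
    intro m hm
    have h1 := hBc ((m : ℤ) + K) (by omega)
    have e : M * β ^ K * q ^ ((m : ℤ) + K - K) = a * q ^ m := by
      rw [add_sub_cancel_right, zpow_natCast, hadef]
    rw [e] at h1; exact h1
  have hfH : ∀ j : ℤ, ‖lam ^ (j + K) • B (j + K)‖ ≤ H j := by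
    intro j
    cases j with
    | ofNat m =>
      show ‖lam ^ ((m : ℤ) + K) • B ((m : ℤ) + K)‖ ≤ a * q ^ m
      rcases Nat.eq_zero_or_pos m with hm | hm
      · subst hm
        have := hA ((0 : ℤ) + K)
        simpa [hadef] using this
      · exact hposcase m hm
    | negSucc m => exact hnegcase m
  -- first conjunct
  have hSum : Summable (fun i : ℤ => ‖lam ^ i • B i‖) := by
    have h1 : Summable (fun j : ℤ => ‖lam ^ (j + K) • B (j + K)‖) :=
      Summable.of_nonneg_of_le (fun j => norm_nonneg _) hfH hHsum
    have h2 := (Equiv.addRight K).summable_iff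
      (f := fun i : ℤ => ‖lam ^ i • B i‖)
    exact h2.mp h1
  refine ⟨hSum, ?_⟩
  -- vector-valued summability and splitting
  have hSumV : Summable (fun i : ℤ => lam ^ i • B i) := hSum.of_norm
  have hsplitF : ∑' i : ℤ, lam ^ i • B i
      = lam ^ K • B K + ∑' i : ℤ, (if i = K then 0 else lam ^ i • B i) :=
    Summable.tsum_eq_add_tsum_ite hSumV K
  set R : EucOp n := ∑' i : ℤ, (if i = K then 0 else lam ^ i • B i) with hRdef
  have hf'le : ∀ i : ℤ, ‖(if i = K then (0 : EucOp n) else lam ^ i • B i)‖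
      ≤ ‖lam ^ i • B i‖ := by
    intro i; by_cases h : i = K <;> simp [h]
  have hSumf' : Summable (fun i : ℤ =>
      ‖(if i = K then (0 : EucOp n) else lam ^ i • B i)‖) :=
    Summable.of_nonneg_of_le (fun i => norm_nonneg _) hf'le hSum
  have hf'H : ∀ j : ℤ,
      ‖(if (j + K) = K then (0 : EucOp n) else lam ^ (j + K) • B (j + K))‖ ≤ H' j := by
    intro j
    cases j with
    | ofNat m =>
      show ‖(if ((m : ℤ) + K) = K then (0 : EucOp n) else _)‖
          ≤ if m = 0 then (0:ℝ) else a * q ^ m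
      rcases Nat.eq_zero_or_pos m with hm | hm
      · subst hm; simp
      · rw [if_neg (by omega), if_neg (by omega)]
        exact hposcase m hm
    | negSucc m =>
      show ‖(if (Int.negSucc m + K) = K then (0 : EucOp n) else _)‖ ≤ a * β⁻¹ ^ (m + 1)
      rw [if_neg (show Int.negSucc m + K ≠ K by rw [Int.negSucc_eq]; omega)]
      exact hnegcase m
  have hRbound : ‖R‖ < a * c⁻¹ := by
    have h1 : ‖R‖ ≤ ∑' i : ℤ, ‖(if i = K then (0 : EucOp n) else lam ^ i • B i)‖ :=
      norm_tsum_le_tsum_norm hSumf'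
    have h2 : Summable (fun j : ℤ =>
        ‖(if (j + K) = K then (0 : EucOp n) else lam ^ (j + K) • B (j + K))‖) :=
      Summable.of_nonneg_of_le (fun j => norm_nonneg _) hf'H hH'sum.summable
    have h3 : (∑' i : ℤ, ‖(if i = K then (0 : EucOp n) else lam ^ i • B i)‖)
        = ∑' j : ℤ, ‖(if (j + K) = K then (0 : EucOp n) else lam ^ (j + K) • B (j + K))‖ :=
      ((Equiv.addRight K).tsum_eq
        (f := fun i : ℤ => ‖(if i = K then (0 : EucOp n) else lam ^ i • B i)‖)).symm
    have h4 : (∑' j : ℤ,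
        ‖(if (j + K) = K then (0 : EucOp n) else lam ^ (j + K) • B (j + K))‖)
        ≤ a * q * (1 - q)⁻¹ + a * β⁻¹ * (1 - β⁻¹)⁻¹ := by
      calc _ ≤ ∑' j : ℤ, H' j := Summable.tsum_le_tsum hf'H h2 hH'sum.summable
        _ = _ := hH'sum.tsum_eq
    -- strict arithmetic bound
    have e1 : q * (1 - q)⁻¹ < (2 * c)⁻¹ := by
      refine statement14.aux_ratio hq0 hcpos ?_
      calc q * (1 + 2 * c) < (1 + 2 * c)⁻¹ * (1 + 2 * c) :=
            mul_lt_mul_of_pos_right hqlt h12c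
        _ = 1 := inv_mul_cancel₀ (ne_of_gt h12c)
    have e2 : β⁻¹ * (1 - β⁻¹)⁻¹ < (2 * c)⁻¹ := by
      refine statement14.aux_ratio hβinv0 hcpos ?_
      calc β⁻¹ * (1 + 2 * c) < β⁻¹ * β :=
            mul_lt_mul_of_pos_left hβgt (inv_pos.mpr hβpos)
        _ = 1 := inv_mul_cancel₀ hβne
    have e3 : a * q * (1 - q)⁻¹ + a * β⁻¹ * (1 - β⁻¹)⁻¹ < a * c⁻¹ := by
      calc a * q * (1 - q)⁻¹ + a * β⁻¹ * (1 - β⁻¹)⁻¹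
          = a * (q * (1 - q)⁻¹ + β⁻¹ * (1 - β⁻¹)⁻¹) := by ring
        _ < a * ((2 * c)⁻¹ + (2 * c)⁻¹) :=
            mul_lt_mul_of_pos_left (by linarith) hapos
        _ = a * c⁻¹ := by rw [mul_inv]; ring
    calc ‖R‖ ≤ ∑' i : ℤ, ‖(if i = K then (0 : EucOp n) else lam ^ i • B i)‖ := h1
      _ = ∑' j : ℤ, ‖(if (j + K) = K then (0 : EucOp n) else lam ^ (j + K) • B (j + K))‖ := h3
      _ ≤ a * q * (1 - q)⁻¹ + a * β⁻¹ * (1 - β⁻¹)⁻¹ := h4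
      _ < a * c⁻¹ := e3
  -- construct the small perturbation
  set t : EucOp n := Ring.inverse (B K) * (lam ^ (-K) • R) with htdef
  have hinvnorm : ‖Ring.inverse (B K)‖ = c / ‖B K‖ := by
    rw [eq_div_iff (ne_of_gt hBKpos), hcdef, kappa]; ring
  have hlamKne : ‖lam‖ ^ K ≠ 0 := zpow_ne_zero K (ne_of_gt hr0)
  have hαKne : α ^ K ≠ 0 := zpow_ne_zero K (ne_of_gt hα)
  have hane : a = ‖B K‖ * ‖lam‖ ^ K := by
    rw [hadef, hM, hβdef, div_zpow, mul_assoc]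
    congr 1
    rw [mul_div_assoc']
    exact mul_div_cancel_left₀ _ hαKne
  have hval : c / ‖B K‖ * (‖lam‖ ^ (-K) * (a * c⁻¹)) = 1 := by
    rw [hane, zpow_neg]
    set x : ℝ := ‖lam‖ ^ K with hx
    have hbne := hBKpos.ne'
    have hcne := hcpos.ne'
    field_simp
  have ht1 : ‖t‖ < 1 := by
    have h1 : ‖t‖ ≤ ‖Ring.inverse (B K)‖ * ‖lam ^ (-K) • R‖ := norm_mul_le _ _
    have h2 : ‖lam ^ (-K) • R‖ = ‖lam‖ ^ (-K) * ‖R‖ :=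
      statement14.norm_zpow_smul lam (-K) R
    have h3 : (0:ℝ) < c / ‖B K‖ * ‖lam‖ ^ (-K) :=
      mul_pos (div_pos hcpos hBKpos) (zpow_pos hr0 (-K))
    calc ‖t‖ ≤ c / ‖B K‖ * (‖lam‖ ^ (-K) * ‖R‖) := by
          rw [← mul_assoc] at *
          calc ‖t‖ ≤ ‖Ring.inverse (B K)‖ * ‖lam ^ (-K) • R‖ := h1
            _ = c / ‖B K‖ * ‖lam‖ ^ (-K) * ‖R‖ := by rw [hinvnorm, h2, mul_assoc]
      _ < c / ‖B K‖ * (‖lam‖ ^ (-K) * (a * c⁻¹)) := by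
          rw [← mul_assoc, ← mul_assoc]
          exact mul_lt_mul_of_pos_left hRbound h3
      _ = 1 := hval
  have h1t : IsUnit (1 + t) := by
    have hmt : ‖-t‖ < 1 := by rwa [norm_neg]
    have h : IsUnit ((1 : EucOp n) - -t) := (Units.oneSub (-t) hmt).isUnit
    rwa [sub_neg_eq_add] at h
  -- the key factorization
  have hBt : B K * t = lam ^ (-K) • R := by
    rw [htdef, ← mul_assoc, Ring.mul_inverse_cancel _ hBKU, one_mul]
  have hfact : lam ^ K • (B K * (1 + t)) = lam ^ K • B K + R := by
    rw [mul_add, mul_one, hBt, smul_add, smul_smul, ← zpow_add₀ hlam0]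
    norm_num
  have hFeq : ∑' i : ℤ, lam ^ i • B i = lam ^ K • (B K * (1 + t)) := by
    rw [hsplitF]
    exact hfact.symm
  rw [hFeq]
  have e : lam ^ K • (B K * (1 + t)) = algebraMap ℂ (EucOp n) (lam ^ K) * (B K * (1 + t)) :=
    Algebra.smul_def (lam ^ K) (B K * (1 + t))
  rw [e]
  exact ((isUnit_iff_ne_zero.mpr (zpow_ne_zero K hlam0)).map
    (algebraMap ℂ (EucOp n))).mul (hBKU.mul h1t)
end

section
/- Let n ≥ 1, let ℓ ∈ ℤ, let B : {i ∈ ℤ : i ≤ ℓ} → M_n(ℂ), and suppose B_ℓ is invertible and α > 0 is such that ‖B_i‖ ≤ ‖B_ℓ‖·α^{ℓ−i} for all i ≤ ℓ. Then for every λ ∈ ℂ with |λ| > (1 + κ(B_ℓ))·α, the series F(λ) = ∑_{i ≤ ℓ} B_i λ^i converges absolutely and F(λ)x ≠ 0 for every nonzero vector x; in particular F(λ) is invertible, so every eigenvalue λ of F satisfies |λ| ≤ (1 + κ(B_ℓ))·α. -/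
set_option maxHeartbeats 1000000 in
/-- upper bound on the eigenvalues. If `B_ℓ` is invertible,
`α > 0`, and `‖B_i‖ ≤ ‖B_ℓ‖α^{ℓ−i}` for all `i ≤ ℓ`, then for every `λ` with
`|λ| > (1+κ(B_ℓ))α` the series `F(λ) = ∑_{i≤ℓ} B_i λ^i` converges absolutely,
kills no nonzero vector, and is invertible; hence every eigenvalue `λ` of `F`
satisfies `|λ| ≤ (1+κ(B_ℓ))α`. -/
theorem statement15 (n : ℕ) (hn : 1 ≤ n) (ℓ : ℤ) (B : ℤ → EucOp n)
    (hU : IsUnit (B ℓ)) (α : ℝ) (hα : 0 < α)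
    (hbd : ∀ i : ℤ, i ≤ ℓ → ‖B i‖ ≤ ‖B ℓ‖ * α ^ (ℓ - i))
    (lam : ℂ) (hlam : (1 + kappa (B ℓ)) * α < ‖lam‖) :
    Summable (fun i : {i : ℤ // i ≤ ℓ} => ‖lam ^ (i : ℤ) • B i‖) ∧
    (∀ x : EuclideanSpace ℂ (Fin n), x ≠ 0 →
      (∑' i : {i : ℤ // i ≤ ℓ}, lam ^ (i : ℤ) • B i) x ≠ 0) ∧
    IsUnit (∑' i : {i : ℤ // i ≤ ℓ}, lam ^ (i : ℤ) • B i) := by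
  haveI : Nontrivial (EuclideanSpace ℂ (Fin n)) := by
    exact ⟨⟨0, EuclideanSpace.single ⟨0, by omega⟩ 1, by
      intro h
      have := congrArg (fun v : EuclideanSpace ℂ (Fin n) => v ⟨0, by omega⟩) h
      simp [EuclideanSpace.single] at this⟩⟩
  haveI : Nontrivial (EucOp n) := inferInstance
  -- basic quantities
  set C : ℝ := ‖B ℓ‖ with hC
  set D : ℝ := ‖Ring.inverse (B ℓ)‖ with hD
  set L : ℝ := ‖lam‖ with hL
  have hκ : kappa (B ℓ) = C * D := rfl
  have hC0 : 0 < C := norm_pos_iff.mpr hU.ne_zero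
  have hD0 : 0 < D := by
    refine norm_pos_iff.mpr ?_
    intro h0
    have h1 : Ring.inverse (B ℓ) * B ℓ = 1 := Ring.inverse_mul_cancel _ hU
    rw [h0, zero_mul] at h1
    exact zero_ne_one h1
  have hκ0 : 0 < kappa (B ℓ) := by rw [hκ]; positivity
  have hL0 : 0 < L := lt_trans (by nlinarith) hlam
  have hlam0 : lam ≠ 0 := by simpa [hL] using hL0.ne'
  set r : ℝ := α / L with hr
  have hr0 : 0 < r := div_pos hα hL0
  have hr1 : r < 1 := by
    rw [hr, div_lt_one hL0]; nlinarith
  have h1r : 0 < 1 - r := by linarith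
  -- the equivalence ℕ ≃ {i // i ≤ ℓ}
  let e : ℕ ≃ {i : ℤ // i ≤ ℓ} :=
    { toFun := fun j => ⟨ℓ - j, by omega⟩
      invFun := fun i => (ℓ - i).toNat
      left_inv := fun j => by simp
      right_inv := fun i => by
        ext
        have := i.2
        simp
        omega }
  set F : {i : ℤ // i ≤ ℓ} → EucOp n := fun i => lam ^ (i : ℤ) • B i with hF
  set g : ℕ → EucOp n := fun j => lam ^ (ℓ - (j : ℤ)) • B (ℓ - (j : ℤ)) with hg
  have hLzpos : ∀ m : ℤ, 0 < L ^ m := fun m => zpow_pos hL0 m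
  -- norm bound on g
  have hgle : ∀ j : ℕ, ‖g j‖ ≤ C * L ^ ℓ * r ^ j := by
    intro j
    have h1 : ‖g j‖ = L ^ (ℓ - (j : ℤ)) * ‖B (ℓ - (j : ℤ))‖ := by
      rw [hg]
      have hns := norm_smul (lam ^ (ℓ - (j : ℤ))) (B (ℓ - (j : ℤ)))
      rw [hns, norm_zpow]
    have h2 : ‖B (ℓ - (j : ℤ))‖ ≤ C * α ^ (j : ℤ) := by
      have := hbd (ℓ - j) (by omega)
      simpa using this
    have h3 : L ^ (ℓ - (j : ℤ)) * (C * α ^ (j : ℤ)) = C * L ^ ℓ * r ^ j := by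
      rw [zpow_sub₀ hL0.ne', hr, div_pow, zpow_natCast, zpow_natCast]
      field_simp
    calc ‖g j‖ ≤ L ^ (ℓ - (j : ℤ)) * (C * α ^ (j : ℤ)) := by
          rw [h1]; exact mul_le_mul_of_nonneg_left h2 (hLzpos _).le
      _ = C * L ^ ℓ * r ^ j := h3
  have hgeo : Summable (fun j : ℕ => C * L ^ ℓ * r ^ j) :=
    (summable_geometric_of_lt_one hr0.le hr1).mul_left _
  have hnormsum : Summable (fun j : ℕ => ‖g j‖) :=
    Summable.of_nonneg_of_le (fun j => norm_nonneg _) hgle hgeo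
  have hsumg : Summable g := hnormsum.of_norm
  -- first claim
  have hsum1 : Summable (fun i : {i : ℤ // i ≤ ℓ} => ‖F i‖) := by
    rw [← e.summable_iff]
    exact hnormsum
  -- the tsum
  have htsum : (∑' i : {i : ℤ // i ≤ ℓ}, F i) = ∑' j : ℕ, g j := (e.tsum_eq F).symm
  -- split off top term
  have hsplit : (∑' j : ℕ, g j) = g 0 + ∑' j : ℕ, g (j + 1) := Summable.tsum_eq_zero_add hsumg
  have hg0 : g 0 = lam ^ ℓ • B ℓ := by simp [hg]
  set t : EucOp n := ∑' j : ℕ, g (j + 1) with ht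
  -- bound the tail
  have htail_geo : Summable (fun j : ℕ => C * L ^ ℓ * r ^ (j+1)) := by
    have heq : (fun j : ℕ => C * L ^ ℓ * r ^ (j+1)) = fun j : ℕ => (C * L ^ ℓ * r) * r ^ j := by
      funext j; ring
    rw [heq]
    exact (summable_geometric_of_lt_one hr0.le hr1).mul_left _
  have htail_sum : Summable (fun j : ℕ => ‖g (j+1)‖) :=
    Summable.of_nonneg_of_le (fun j => norm_nonneg _) (fun j => hgle (j+1)) htail_geo
  have htbound : ‖t‖ ≤ C * L ^ ℓ * r * (1 - r)⁻¹ := by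
    calc ‖t‖ ≤ ∑' j : ℕ, ‖g (j+1)‖ := norm_tsum_le_tsum_norm htail_sum
      _ ≤ ∑' j : ℕ, C * L ^ ℓ * r ^ (j+1) :=
          Summable.tsum_le_tsum (fun j => hgle (j+1)) htail_sum htail_geo
      _ = C * L ^ ℓ * r * (1 - r)⁻¹ := by
          have heq : (fun j : ℕ => C * L ^ ℓ * r ^ (j+1))
              = fun j : ℕ => (C * L ^ ℓ * r) * r ^ j := by
            funext j; ring
          rw [heq, tsum_mul_left, tsum_geometric_of_lt_one hr0.le hr1]
  -- the unit u = lam^ℓ • B ℓ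
  set w : (EucOp n)ˣ := hU.unit with hw
  have hwinv : (↑w⁻¹ : EucOp n) = Ring.inverse (B ℓ) := by
    rw [hw, ← Ring.inverse_unit hU.unit, IsUnit.unit_spec]
  let U : (EucOp n)ˣ :=
    { val := lam ^ ℓ • (w : EucOp n)
      inv := (lam ^ ℓ)⁻¹ • (↑w⁻¹ : EucOp n)
      val_inv := by
        rw [smul_mul_smul_comm, mul_inv_cancel₀ (zpow_ne_zero ℓ hlam0), w.mul_inv, one_smul]
      inv_val := by
        rw [smul_mul_smul_comm, inv_mul_cancel₀ (zpow_ne_zero ℓ hlam0), w.inv_mul, one_smul] }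
  have hUval : (U : EucOp n) = lam ^ ℓ • B ℓ := by
    show lam ^ ℓ • (w : EucOp n) = _
    rw [hw, IsUnit.unit_spec]
  have hUinv : ‖(↑U⁻¹ : EucOp n)‖ = (L ^ ℓ)⁻¹ * D := by
    show ‖(lam ^ ℓ)⁻¹ • (↑w⁻¹ : EucOp n)‖ = _
    have hns := norm_smul ((lam ^ ℓ)⁻¹) (↑w⁻¹ : EucOp n)
    rw [hns, norm_inv, norm_zpow, hwinv, hL, hD]
  -- key strict inequality
  have hkey : ‖t‖ < ‖(↑U⁻¹ : EucOp n)‖⁻¹ := by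
    rw [hUinv]
    have hk : C * D * r < 1 - r := by
      have h1 : (1 + C * D) * r < 1 := by
        rw [hr, ← mul_div_assoc, div_lt_one hL0]
        rw [hκ] at hlam
        exact hlam
      nlinarith
    have hP : 0 < L ^ ℓ := hLzpos ℓ
    have hgoal : C * L ^ ℓ * r * (1 - r)⁻¹ < ((L ^ ℓ)⁻¹ * D)⁻¹ := by
      rw [mul_inv, inv_inv, ← div_eq_mul_inv, ← div_eq_mul_inv, div_lt_div_iff₀ h1r hD0]
      nlinarith
    exact lt_of_le_of_lt htbound hgoal
  -- conclude
  have hunit : IsUnit (∑' i : {i : ℤ // i ≤ ℓ}, F i) := by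
    rw [htsum, hsplit, hg0, ← hUval]
    exact (U.add t hkey).isUnit
  refine ⟨hsum1, ?_, hunit⟩
  intro x hx hzero
  obtain ⟨V, hV⟩ := hunit
  apply hx
  have h1 : (↑V⁻¹ * ↑V : EucOp n) x = x := by
    rw [V.inv_mul]
    exact ContinuousLinearMap.one_apply x
  rw [hV] at h1
  rw [← h1]
  show (↑V⁻¹ : EucOp n) ((∑' i : {i : ℤ // i ≤ ℓ}, F i) x) = 0
  rw [hzero, map_zero]
end

section
/- Let n ≥ 1, let ℓ ∈ ℤ, let B : {i ∈ ℤ : i ≥ ℓ} → M_n(ℂ), and suppose B_ℓ is invertible and α > 0 is such that ‖B_i‖ ≤ ‖B_ℓ‖·α^{ℓ−i} for all i ≥ ℓ. Then for every λ ∈ ℂ with 0 < |λ| < (1 + κ(B_ℓ))^{−1}·α, the series F(λ) = ∑_{i ≥ ℓ} B_i λ^i converges absolutely and F(λ)x ≠ 0 for every nonzero vector x; in particular F(λ) is invertible, so every nonzero eigenvalue λ of F satisfies |λ| ≥ (1 + κ(B_ℓ))^{−1}·α. -/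
set_option maxHeartbeats 1000000 in
/-- lower bound on the nonzero eigenvalues. If `B_ℓ` is
invertible, `α > 0`, and `‖B_i‖ ≤ ‖B_ℓ‖α^{ℓ−i}` for all `i ≥ ℓ`, then for
every `λ` with `0 < |λ| < (1+κ(B_ℓ))⁻¹α` the series `F(λ) = ∑_{i≥ℓ} B_i λ^i`
converges absolutely, kills no nonzero vector, and is invertible; hence every
nonzero eigenvalue `λ` of `F` satisfies `|λ| ≥ (1+κ(B_ℓ))⁻¹α`. -/
theorem statement16 (n : ℕ) (hn : 1 ≤ n) (ℓ : ℤ) (B : ℤ → EucOp n)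
    (hU : IsUnit (B ℓ)) (α : ℝ) (hα : 0 < α)
    (hbd : ∀ i : ℤ, ℓ ≤ i → ‖B i‖ ≤ ‖B ℓ‖ * α ^ (ℓ - i))
    (lam : ℂ) (hlam0 : 0 < ‖lam‖) (hlam : ‖lam‖ < (1 + kappa (B ℓ))⁻¹ * α) :
    Summable (fun i : {i : ℤ // ℓ ≤ i} => ‖lam ^ (i : ℤ) • B i‖) ∧
    (∀ x : EuclideanSpace ℂ (Fin n), x ≠ 0 →
      (∑' i : {i : ℤ // ℓ ≤ i}, lam ^ (i : ℤ) • B i) x ≠ 0) ∧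
    IsUnit (∑' i : {i : ℤ // ℓ ≤ i}, lam ^ (i : ℤ) • B i) := by
  haveI : Nonempty (Fin n) := Fin.pos_iff_nonempty.mp hn
  haveI : Nontrivial (EuclideanSpace ℂ (Fin n)) := inferInstance
  have hlamne : lam ≠ 0 := by simpa using hlam0.ne'
  set K : ℝ := ‖Ring.inverse (B ℓ)‖ with hK
  set a : ℝ := ‖lam‖ with ha
  set r : ℝ := a / α with hr
  have hκeq : kappa (B ℓ) = ‖B ℓ‖ * K := rfl
  have hκ1 : 1 ≤ ‖B ℓ‖ * K := by
    have h1 : (1 : EucOp n) = B ℓ * Ring.inverse (B ℓ) := by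
      rw [Ring.mul_inverse_cancel _ hU]
    calc (1:ℝ) = ‖(1 : EucOp n)‖ := (norm_one).symm
      _ = ‖B ℓ * Ring.inverse (B ℓ)‖ := by rw [← h1]
      _ ≤ ‖B ℓ‖ * K := norm_mul_le _ _
  have hBnn : 0 ≤ ‖B ℓ‖ := norm_nonneg _
  have hKnn : 0 ≤ K := norm_nonneg _
  have hBpos : 0 < ‖B ℓ‖ := by nlinarith
  have hKpos : 0 < K := by nlinarith
  have hκpos : (0:ℝ) < 1 + kappa (B ℓ) := by rw [hκeq]; nlinarith
  have hr1 : r * (1 + kappa (B ℓ)) < 1 := by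
    rw [hr, div_mul_eq_mul_div, div_lt_one hα]
    calc a * (1 + kappa (B ℓ)) < ((1 + kappa (B ℓ))⁻¹ * α) * (1 + kappa (B ℓ)) := by
          apply mul_lt_mul_of_pos_right hlam hκpos
      _ = α := by field_simp
  have hrnn : 0 ≤ r := div_nonneg hlam0.le hα.le
  have hrlt : r < 1 := by nlinarith [mul_nonneg hrnn (by nlinarith : (0:ℝ) ≤ kappa (B ℓ))]
  -- basic bound on each term
  have hterm : ∀ i : ℤ, ℓ ≤ i → ‖lam ^ i • B i‖ ≤ (a ^ ℓ * ‖B ℓ‖) * r ^ (i - ℓ).toNat := by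
    intro i hi
    have h1 : ‖lam ^ i • B i‖ = a ^ i * ‖B i‖ := by
      rw [norm_smul (lam ^ i) (B i), norm_zpow]
    rw [h1]
    have h2 : a ^ i * ‖B i‖ ≤ a ^ i * (‖B ℓ‖ * α ^ (ℓ - i)) :=
      mul_le_mul_of_nonneg_left (hbd i hi) (zpow_nonneg hlam0.le i)
    refine h2.trans (le_of_eq ?_)
    have hapos : (0:ℝ) < a := hlam0
    have h3 : a ^ i * (‖B ℓ‖ * α ^ (ℓ - i)) = (a ^ ℓ * ‖B ℓ‖) * ((a / α) ^ (i - ℓ)) := by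
      rw [div_zpow]
      have e1 : a ^ i = a ^ ℓ * a ^ (i - ℓ) := by
        rw [← zpow_add₀ hapos.ne']; congr 1; ring
      have e2 : α ^ (ℓ - i) = (α ^ (i - ℓ))⁻¹ := by
        rw [← zpow_neg]; congr 1; ring
      rw [e1, e2]; ring
    rw [h3, hr]
    congr 1
    rw [← zpow_natCast, Int.toNat_of_nonneg (by omega)]
  -- reindexing ℕ → the subtype
  let e : ℕ ≃ {i : ℤ // ℓ ≤ i} :=
    ⟨fun k => ⟨ℓ + k, by omega⟩, fun i => (i.1 - ℓ).toNat,
     fun k => by simp, fun i => by ext; simp; omega⟩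
  have he : ∀ k : ℕ, ((e k : {i : ℤ // ℓ ≤ i}) : ℤ) = ℓ + k := fun k => rfl
  set g : ℕ → EucOp n := fun k => lam ^ (ℓ + (k:ℤ)) • B (ℓ + k) with hg
  have hgbd : ∀ k : ℕ, ‖g k‖ ≤ (a ^ ℓ * ‖B ℓ‖) * r ^ k := by
    intro k
    have := hterm (ℓ + k) (by omega)
    simpa using this
  have hgeo : Summable (fun k : ℕ => (a ^ ℓ * ‖B ℓ‖) * r ^ k) :=
    (summable_geometric_of_lt_one hrnn hrlt).mul_left _
  have hgsum : Summable (fun k : ℕ => ‖g k‖) :=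
    Summable.of_nonneg_of_le (fun k => norm_nonneg _) hgbd hgeo
  have hcomp : (fun i : {i : ℤ // ℓ ≤ i} => ‖lam ^ (i : ℤ) • B i‖) ∘ e
      = fun k : ℕ => ‖g k‖ := by
    funext k
    simp only [Function.comp_apply, he, hg]
  have hsub : Summable (fun i : {i : ℤ // ℓ ≤ i} => ‖lam ^ (i : ℤ) • B i‖) := by
    rw [← Equiv.summable_iff e, hcomp]
    exact hgsum
  have hgsum' : Summable g := hgsum.of_norm
  have htsum : (∑' i : {i : ℤ // ℓ ≤ i}, lam ^ (i : ℤ) • B i) = ∑' k : ℕ, g k := by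
    rw [← Equiv.tsum_eq e]
    exact tsum_congr fun k => by simp only [he, hg]
  have hsplit : (∑' k : ℕ, g k) = g 0 + ∑' k : ℕ, g (k + 1) :=
    Summable.tsum_eq_zero_add hgsum'
  -- the dominant unit u = lam^ℓ • B ℓ
  set u : (EucOp n)ˣ :=
    { val := lam ^ ℓ • B ℓ
      inv := lam ^ (-ℓ) • (Ring.inverse (B ℓ))
      val_inv := by
        rw [smul_mul_smul_comm, ← zpow_add₀ hlamne, add_neg_cancel, zpow_zero,
          Ring.mul_inverse_cancel _ hU, one_smul]
      inv_val := by
        rw [smul_mul_smul_comm, ← zpow_add₀ hlamne, neg_add_cancel, zpow_zero,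
          Ring.inverse_mul_cancel _ hU, one_smul] } with hu
  have hg0 : g 0 = u := by simp [hg, hu]
  set T : EucOp n := ∑' k : ℕ, g (k + 1) with hT
  have hTbd : ‖T‖ ≤ (a ^ ℓ * ‖B ℓ‖) * (r * (1 - r)⁻¹) := by
    calc ‖T‖ ≤ ∑' k : ℕ, ‖g (k + 1)‖ :=
          norm_tsum_le_tsum_norm (hgsum.comp_injective (add_left_injective 1))
      _ ≤ ∑' k : ℕ, (a ^ ℓ * ‖B ℓ‖) * r ^ (k + 1) := by
          exact Summable.tsum_le_tsum (fun k => hgbd (k+1))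
            (hgsum.comp_injective (add_left_injective 1))
            (hgeo.comp_injective (add_left_injective 1))
      _ = (a ^ ℓ * ‖B ℓ‖) * (r * (1 - r)⁻¹) := by
          rw [tsum_mul_left]
          congr 1
          calc (∑' k : ℕ, r ^ (k+1)) = ∑' k : ℕ, r * r ^ k := by
                simp [pow_succ, mul_comm]
            _ = r * (1-r)⁻¹ := by
                rw [tsum_mul_left, tsum_geometric_of_lt_one hrnn hrlt]
  have huinv : ‖(↑u⁻¹ : EucOp n)‖ = a ^ (-ℓ) * K := by
    show ‖lam ^ (-ℓ) • (Ring.inverse (B ℓ))‖ = _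
    rw [norm_smul (lam ^ (-ℓ)) (Ring.inverse (B ℓ)), norm_zpow]
  have hkey : ‖T‖ < ‖(↑u⁻¹ : EucOp n)‖⁻¹ := by
    rw [huinv]
    apply lt_of_le_of_lt hTbd
    have h1r : (0:ℝ) < 1 - r := by linarith
    have heq : (a ^ (-ℓ) * K)⁻¹ = a ^ ℓ * K⁻¹ := by
      rw [mul_inv, zpow_neg, inv_inv]
    rw [heq, mul_assoc]
    have haℓ : (0:ℝ) < a ^ ℓ := zpow_pos hlam0 ℓ
    apply mul_lt_mul_of_pos_left _ haℓ
    have h2 : ‖B ℓ‖ * r * K < 1 - r := by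
      have h5 := hr1
      rw [hκeq] at h5
      nlinarith
    have h4 : ‖B ℓ‖ * (r * (1 - r)⁻¹) = (‖B ℓ‖ * r) / (1 - r) := by ring
    rw [h4, ← one_div, div_lt_div_iff₀ h1r hKpos]
    linarith
  -- conclude
  set v : (EucOp n)ˣ := u.add T hkey with hv
  have hval : (↑v : EucOp n) = ↑u + T := rfl
  have hSv : (∑' i : {i : ℤ // ℓ ≤ i}, lam ^ (i : ℤ) • B i) = ↑v := by
    rw [htsum, hsplit, hg0, hval]
  refine ⟨hsub, ?_, ?_⟩
  · intro x hx hFx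
    apply hx
    have h6 : (↑v⁻¹ * ↑v : EucOp n) x = x := by rw [v.inv_mul]; rfl
    rw [← h6]
    show (↑v⁻¹ : EucOp n) ((↑v : EucOp n) x) = 0
    rw [← hSv, hFx, map_zero]
  · rw [hSv]; exact v.isUnit
end

section
/- Let b : ℕ → [0,∞), let R > 0 and C > 0 satisfy b_m ≤ C·R^{−m} for all m > 0, and let i < j be positive integers with b_i > 0, b_j > 0 and b_j > b_i·R^{−(j−i)}. Define ℓ₂ = ((j−i)·log C + i·log b_j − j·log b_i) / ((j−i)·log R + log b_j − log b_i). Assume that for every integer m with j+1 ≤ m ≤ ℓ₂ one has log b_m ≤ ((m−i)·log b_j − (m−j)·log b_i)/(j−i). Then for EVERY integer m > j (with b_m > 0), log b_m ≤ ((m−i)·log b_j − (m−j)·log b_i)/(j−i); that is, every point (m, log b_m) with m > j lies on or below the line through (i, log b_i) and (j, log b_j), so the segment from (i, log b_i) to (j, log b_j) belongs to the upper convex hull of all the points {(m, log b_m) : b_m > 0}. -/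
/-- truncation of the Newton polygon. If `b_m ≤ C·R^{−m}` for all
`m > 0`, the segment from `(i, log b_i)` to `(j, log b_j)` has slope greater
than `−log R` (i.e. `b_j > b_i R^{−(j−i)}`), and every point `(m, log b_m)`
with `j+1 ≤ m ≤ ℓ₂` lies on or below the line through `(i, log b_i)` and
`(j, log b_j)`, then every point `(m, log b_m)` with `m > j` (and `b_m > 0`)
lies on or below that line: the segment belongs to the upper convex hull. -/
theorem statement17 (b : ℕ → ℝ) (hb : ∀ m, 0 ≤ b m)
    (R C : ℝ) (hR : 0 < R) (hC : 0 < C)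
    (hdecay : ∀ m : ℕ, 0 < m → b m ≤ C * R ^ (-(m : ℤ)))
    (i j : ℕ) (hi : 0 < i) (hij : i < j)
    (hbi : 0 < b i) (hbj : 0 < b j)
    (hslope : b i * R ^ (-((j : ℤ) - (i : ℤ))) < b j)
    (hcheck : ∀ m : ℕ, j + 1 ≤ m →
      (m : ℝ) ≤ (((j : ℝ) - i) * Real.log C + i * Real.log (b j)
          - j * Real.log (b i)) /
        (((j : ℝ) - i) * Real.log R + Real.log (b j) - Real.log (b i)) →
      Real.log (b m) ≤
        (((m : ℝ) - i) * Real.log (b j) - ((m : ℝ) - j) * Real.log (b i)) /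
          ((j : ℝ) - i)) :
    ∀ m : ℕ, j < m → 0 < b m →
      Real.log (b m) ≤
        (((m : ℝ) - i) * Real.log (b j) - ((m : ℝ) - j) * Real.log (b i)) /
          ((j : ℝ) - i) := by
  intro m hm hbm
  have hji : (0 : ℝ) < (j : ℝ) - i := by
    have : (i : ℝ) < j := by exact_mod_cast hij
    linarith
  have hD : 0 < ((j : ℝ) - i) * Real.log R + Real.log (b j) - Real.log (b i) := by
    have h1 : Real.log (b i * R ^ (-((j : ℤ) - (i : ℤ)))) < Real.log (b j) :=
      Real.log_lt_log (by positivity) hslope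
    rw [Real.log_mul (ne_of_gt hbi) (by positivity), Real.log_zpow] at h1
    push_cast at h1
    linarith
  by_cases hcase : (m : ℝ) ≤ (((j : ℝ) - i) * Real.log C + i * Real.log (b j)
      - j * Real.log (b i)) /
      (((j : ℝ) - i) * Real.log R + Real.log (b j) - Real.log (b i))
  · exact hcheck m hm hcase
  · push_neg at hcase
    have hmD : ((j : ℝ) - i) * Real.log C + i * Real.log (b j) - j * Real.log (b i)
        < (m : ℝ) * (((j : ℝ) - i) * Real.log R + Real.log (b j) - Real.log (b i)) :=
      (div_lt_iff₀ hD).mp hcase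
    have hlog : Real.log (b m) ≤ Real.log C - (m : ℝ) * Real.log R := by
      have hmpos : 0 < m := by omega
      have h2 : Real.log (b m) ≤ Real.log (C * R ^ (-(m : ℤ))) :=
        Real.log_le_log hbm (hdecay m hmpos)
      rw [Real.log_mul (ne_of_gt hC) (by positivity), Real.log_zpow] at h2
      push_cast at h2
      linarith
    rw [le_div_iff₀ hji]
    nlinarith [mul_le_mul_of_nonneg_right hlog hji.le]
end

section
/- Let b : ℕ → [0,∞) with b_j > 0 for infinitely many j ≥ 1, let γ > 0 and α > 0, and assume that the sequence (b_j·α^j), restricted to the indices j ≥ 1 with b_j > 0, is nondecreasing and satisfies b_j·α^j ≤ γ for all such j. Define b̂_0 = γ and b̂_j = b_j for j ≥ 1. Then sup_{j ≥ 0} b̂_j·x^j = γ for every x ∈ [0, α], while sup_{j ≥ 0} b̂_j·x^j = +∞ for every x > α. In particular, the domain of the max-times tropical series x ↦ sup_j b̂_j x^j is [0, α], 0 is its only vertex index among the nonnegative indices, and α is a tropical root of infinite multiplicity. -/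
/-- degenerate Graham-scan update. If infinitely many `b_j` with
`j ≥ 1` are positive, the values `b_j α^j` (over positive indices with
`b_j > 0`) are nondecreasing and bounded by `γ`, and we set `b̂_0 = γ`,
`b̂_j = b_j` for `j ≥ 1`, then `sup_j b̂_j x^j = γ` for `0 ≤ x ≤ α` while the
supremum is `+∞` (the family is unbounded) for `x > α`: the domain of the
updated tropical series is `[0, α]` and `α` is a root of infinite
multiplicity. -/
theorem statement18 (b : ℕ → ℝ) (hb : ∀ j, 0 ≤ b j)
    (hinf : {j : ℕ | 1 ≤ j ∧ 0 < b j}.Infinite)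
    (γ α : ℝ) (hγ : 0 < γ) (hα : 0 < α)
    (hmono : ∀ j k' : ℕ, 1 ≤ j → j ≤ k' → 0 < b j → 0 < b k' →
      b j * α ^ j ≤ b k' * α ^ k')
    (hbdd : ∀ j : ℕ, 1 ≤ j → 0 < b j → b j * α ^ j ≤ γ) :
    (∀ x : ℝ, 0 ≤ x → x ≤ α →
      (⨆ j : ℕ, (if j = 0 then γ else b j) * x ^ j) = γ) ∧
    (∀ x : ℝ, α < x →
      ¬ BddAbove (Set.range fun j : ℕ => (if j = 0 then γ else b j) * x ^ j)) := by
  constructor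
  · intro x hx hxα
    have hub : ∀ j : ℕ, (if j = 0 then γ else b j) * x ^ j ≤ γ := by
      intro j
      rcases Nat.eq_zero_or_pos j with h0 | h1
      · simp [h0]
      · have hj : j ≠ 0 := Nat.pos_iff_ne_zero.mp h1
        simp only [hj, if_neg, ite_false]
        rcases (hb j).lt_or_eq with hbj | hbj
        · have hxp : x ^ j ≤ α ^ j := pow_le_pow_left₀ hx hxα j
          calc b j * x ^ j ≤ b j * α ^ j := by
                exact mul_le_mul_of_nonneg_left hxp (hb j)
            _ ≤ γ := hbdd j h1 hbj
        · rw [← hbj]; simpa using hγ.le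
    refine le_antisymm (ciSup_le hub) ?_
    have : (if (0:ℕ) = 0 then γ else b 0) * x ^ (0:ℕ) = γ := by simp
    calc γ = (if (0:ℕ) = 0 then γ else b 0) * x ^ (0:ℕ) := this.symm
      _ ≤ ⨆ j : ℕ, (if j = 0 then γ else b j) * x ^ j :=
          le_ciSup ⟨γ, fun y ⟨j, hj⟩ => hj ▸ hub j⟩ 0
  · intro x hx ⟨M, hM⟩
    obtain ⟨j₀, hj₀⟩ := hinf.nonempty
    set c := b j₀ * α ^ j₀ with hc
    have hcpos : 0 < c := mul_pos hj₀.2 (pow_pos hα j₀)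
    have hr : 1 < x / α := (one_lt_div hα).mpr hx
    obtain ⟨N, hN⟩ := pow_unbounded_of_one_lt (M / c) hr
    obtain ⟨j, hjS, hjgt⟩ := hinf.exists_gt (max N j₀)
    have hjN : N ≤ j := le_of_lt (lt_of_le_of_lt (le_max_left _ _) hjgt)
    have hjj₀ : j₀ ≤ j := le_of_lt (lt_of_le_of_lt (le_max_right _ _) hjgt)
    have hcj : c ≤ b j * α ^ j := hmono j₀ j hj₀.1 hjj₀ hj₀.2 hjS.2
    have hrj : (x / α) ^ N ≤ (x / α) ^ j := pow_le_pow_right₀ hr.le hjN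
    have hMj : M < c * (x / α) ^ j := by
      have h1 : M / c < (x / α) ^ j := lt_of_lt_of_le hN hrj
      calc M = c * (M / c) := by field_simp
        _ < c * (x / α) ^ j := by
            exact mul_lt_mul_of_pos_left h1 hcpos
    have hxj : b j * x ^ j = (b j * α ^ j) * (x / α) ^ j := by
      field_simp
      rw [mul_assoc, ← mul_pow, mul_div_cancel₀ x hα.ne']
    have hle : c * (x / α) ^ j ≤ b j * x ^ j := by
      rw [hxj]
      exact mul_le_mul_of_nonneg_right hcj (pow_nonneg (by positivity) j)
    have hjne : j ≠ 0 := Nat.pos_iff_ne_zero.mp hjS.1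
    have := hM ⟨j, rfl⟩
    simp only [hjne, ite_false] at this
    linarith
end

section
/- Let (j_i)_{i∈ℕ} be a strictly increasing sequence of positive integers, let (y_i)_{i∈ℕ} be real numbers such that the slopes t_i := (y_{i+1} − y_i)/(j_{i+1} − j_i) tend to −∞ as i → ∞, and let γ ∈ ℝ. Then there exists an index i such that (y_i − γ)/j_i ≥ t_i. (Consequently, the Graham-scan update of the Newton polygon with vertices (j_i, y_i) by the new node (0, γ) terminates within a finite number of slope comparisons.) -/
open Filter

/-- termination of the Graham-scan update. If `(j_i, y_i)` are
the vertices of a Newton polygon with strictly increasing positive abscissas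
`j_i` and segment slopes `t_i = (y_{i+1} − y_i)/(j_{i+1} − j_i)` tending to
`−∞`, then for any new node `(0, γ)` there is an index `i` at which the scan
stops: the slope `(y_i − γ)/j_i` is at least `t_i`. -/
theorem statement19 (j : ℕ → ℕ) (hj : StrictMono j) (hjpos : ∀ i, 0 < j i)
    (y : ℕ → ℝ)
    (ht : Tendsto (fun i : ℕ =>
      (y (i + 1) - y i) / ((j (i + 1) : ℝ) - (j i : ℝ))) atTop atBot)
    (γ : ℝ) :
    ∃ i : ℕ, (y (i + 1) - y i) / ((j (i + 1) : ℝ) - (j i : ℝ)) ≤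
      (y i - γ) / (j i : ℝ) := by
  by_contra hcon
  push_neg at hcon
  set s : ℕ → ℝ := fun i => (y i - γ) / (j i : ℝ) with hs
  set t : ℕ → ℝ := fun i => (y (i + 1) - y i) / ((j (i + 1) : ℝ) - (j i : ℝ)) with hts
  have hjr : ∀ i, (0 : ℝ) < (j i : ℝ) := fun i => by exact_mod_cast hjpos i
  have hd : ∀ i, (0 : ℝ) < (j (i + 1) : ℝ) - (j i : ℝ) := fun i => by
    have := hj (Nat.lt_succ_self i)
    have : (j i : ℝ) < (j (i + 1) : ℝ) := by exact_mod_cast this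
    linarith
  -- s is strictly increasing
  have hmono : StrictMono s := strictMono_nat_of_lt_succ (fun i => by
    have hti : s i < t i := hcon i
    have h1 : y i - γ = (j i : ℝ) * s i := by
      rw [hs]; beta_reduce; exact (mul_div_cancel₀ _ (hjr i).ne').symm
    have h2 : y (i + 1) - y i = ((j (i + 1) : ℝ) - (j i : ℝ)) * t i := by
      rw [hts]; beta_reduce; exact (mul_div_cancel₀ _ (hd i).ne').symm
    have h3 : y (i + 1) - γ = (j i : ℝ) * s i + ((j (i + 1) : ℝ) - (j i : ℝ)) * t i := by
      linarith
    have h4 : (j (i + 1) : ℝ) * s i < y (i + 1) - γ := by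
      nlinarith [hd i, hjr i]
    have : s i < (y (i + 1) - γ) / (j (i + 1) : ℝ) :=
      (lt_div_iff₀ (hjr (i + 1))).mpr (by linarith [h4])
    simpa [hs] using this)
  have hlow : ∀ i, s 0 ≤ t i := fun i => le_of_lt (lt_of_le_of_lt (hmono.le_iff_le.mpr (Nat.zero_le i)) (hcon i))
  obtain ⟨N, hN⟩ := (tendsto_atBot.mp ht (s 0 - 1)).exists
  have := hlow N
  simp only [hts] at this
  linarith
end
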